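/- arXiv:2412.00985 — 6 statements merged into one kernel-verified Lean document; each statement's English description precedes it below -/
import Mathlib

section
/- Let $\mathcal{P}$ be a finite-horizon POMDP with horizon $H$, rewards $r_h(s,a) \in [0,1]$, satisfying the deterministic filter condition (so that the true decoding functions $\psi_h$ exist). Let $\pi^E$ be any state-based policy and let $\{g_h\}_{h \in [H]}$ be decoding functions such that the probability, under the trajectory distribution induced by running $\pi^E$ through the true decoder on $\mathcal{P}$, that there exists some $h \in [H]$ with $g_h(s_{h-1}, a_{h-1}, o_h) \neq s_h$, is at most $\epsilon$. Let $\pi$ be the composed policy that at each step decodes the state via $g_h$ (applied recursively along the history) and then acts via $\pi^E$ on the decoded state. Then $v^{\mathcal{P}}(\pi) \geq v^{\mathcal{P}}(\tilde{\pi}^E) - H\epsilon$, where $\tilde{\pi}^E$ is the policy that uses the true decoding functions $\psi_h$ composed with $\pi^E$, and $v^{\mathcal{P}}$ denotes expected cumulative reward over an episode. -/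
open Finset

section POMDP

variable {St Ob Ac : Type*}

/-- Extend a `Fin H`-indexed sequence to `ℕ` by a default value. -/
def extN {α : Type*} [Inhabited α] {H : ℕ} (f : Fin H → α) : ℕ → α :=
  fun k => if hk : k < H then f ⟨k, hk⟩ else default

/-- A general history-and-state-dependent (randomized) policy: at each step it
assigns a probability to each action, given the full trajectory so far. -/
abbrev GPolicy (St Ob Ac : Type*) := ℕ → (ℕ → St) → (ℕ → Ob) → (ℕ → Ac) → Ac → ℝ

/-- A policy is causal if its choice at step `h` depends only on states and
observations up to step `h` and actions before step `h`. -/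
def CausalPolicy (H : ℕ) (π : GPolicy St Ob Ac) : Prop :=
  ∀ h, h < H → ∀ (s s' : ℕ → St) (o o' : ℕ → Ob) (a a' : ℕ → Ac),
    (∀ k, k ≤ h → s k = s' k) → (∀ k, k ≤ h → o k = o' k) → (∀ k, k < h → a k = a' k) →
    π h s o a = π h s' o' a'

/-- A valid general policy: causal, and a probability distribution over actions
at every step. -/
def IsPolicy [Fintype Ac] (H : ℕ) (π : GPolicy St Ob Ac) : Prop :=
  CausalPolicy H π ∧ ∀ h s o a, (∀ b, 0 ≤ π h s o a b) ∧ ∑ b, π h s o a b = 1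

/-- Probability of a (ℕ-indexed) trajectory `(s, o, a)` of a finite-horizon POMDP
`(μ, T, Obs)` of horizon `H` under policy `π`. -/
noncomputable def trajProbN (H : ℕ) (μ : St → ℝ) (T : ℕ → St → Ac → St → ℝ)
    (Obs : ℕ → St → Ob → ℝ) (π : GPolicy St Ob Ac)
    (s : ℕ → St) (o : ℕ → Ob) (a : ℕ → Ac) : ℝ :=
  μ (s 0) * ∏ h ∈ Finset.range H,
    (Obs h (s h) (o h) * π h s o a (a h) *
      (if h + 1 < H then T h (s h) (a h) (s (h + 1)) else 1))

/-- Model-probability of a trajectory (with the policy factors removed): positive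
exactly on trajectories reachable under some general policy. -/
noncomputable def modelProbN (H : ℕ) (μ : St → ℝ) (T : ℕ → St → Ac → St → ℝ)
    (Obs : ℕ → St → Ob → ℝ) (s : ℕ → St) (o : ℕ → Ob) (a : ℕ → Ac) : ℝ :=
  μ (s 0) * ∏ h ∈ Finset.range H,
    (Obs h (s h) (o h) * (if h + 1 < H then T h (s h) (a h) (s (h + 1)) else 1))

/-- A full trajectory `(s_{1:H}, o_{1:H}, a_{1:H})` of a horizon-`H` POMDP. -/
abbrev Traj (H : ℕ) (St Ob Ac : Type*) := (Fin H → St) × (Fin H → Ob) × (Fin H → Ac)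

/-- Probability of a full trajectory. -/
noncomputable def trajProb [Inhabited St] [Inhabited Ob] [Inhabited Ac]
    (H : ℕ) (μ : St → ℝ) (T : ℕ → St → Ac → St → ℝ) (Obs : ℕ → St → Ob → ℝ)
    (π : GPolicy St Ob Ac) (t : Traj H St Ob Ac) : ℝ :=
  trajProbN H μ T Obs π (extN t.1) (extN t.2.1) (extN t.2.2)

/-- Expected cumulative reward (value) of a policy `π`. -/
noncomputable def pvalue [Fintype St] [Fintype Ob] [Fintype Ac]
    [Inhabited St] [Inhabited Ob] [Inhabited Ac]
    (H : ℕ) (μ : St → ℝ) (T : ℕ → St → Ac → St → ℝ) (Obs : ℕ → St → Ob → ℝ)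
    (r : ℕ → St → Ac → ℝ) (π : GPolicy St Ob Ac) : ℝ :=
  ∑ t : Traj H St Ob Ac,
    trajProb H μ T Obs π t * ∑ h ∈ Finset.range H, r h (extN t.1 h) (extN t.2.2 h)

end POMDP

section Distill

open Classical

variable {St Ob Ac : Type*}

/-- Recursively decoded state at each step, obtained by applying the decoding
functions `g` along the observation-action history (with dummy initial state
`s0` and dummy initial action `a0`). -/
def decSt (g : ℕ → St → Ac → Ob → St) (s0 : St) (a0 : Ac)
    (o : ℕ → Ob) (a : ℕ → Ac) : ℕ → St
  | 0 => g 0 s0 a0 (o 0)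
  | k + 1 => g (k + 1) (decSt g s0 a0 o a k) (a k) (o (k + 1))

/-- The distilled (history-based) policy: decode the state recursively via `g`,
then act with the state-based expert policy `πE`. -/
noncomputable def distill (πE : ℕ → St → Ac → ℝ) (g : ℕ → St → Ac → Ob → St)
    (s0 : St) (a0 : Ac) : GPolicy St Ob Ac :=
  fun h _s o a b => πE h (decSt g s0 a0 o a h) b

private lemma decSt_eq_of_correct {H : ℕ} (s0 : St) (a0 : Ac) (d : ℕ → St → Ac → Ob → St)
    (s : ℕ → St) (o : ℕ → Ob) (a : ℕ → Ac)
    (hd : ∀ h, h < H → d h (if h = 0 then s0 else s (h - 1))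
      (if h = 0 then a0 else a (h - 1)) (o h) = s h) :
    ∀ h, h < H → decSt d s0 a0 o a h = s h := by
  intro h
  induction h with
  | zero => intro hh; simpa [decSt] using hd 0 hh
  | succ k ih =>
    intro hh
    have hk := ih (Nat.lt_of_succ_lt hh)
    have h2 := hd (k + 1) hh
    simp only [Nat.succ_ne_zero, if_false, Nat.add_sub_cancel] at h2
    simp [decSt, hk, h2]

private lemma trajProbN_eq_zero {H : ℕ} {μ : St → ℝ} {T : ℕ → St → Ac → St → ℝ}
    {Obs : ℕ → St → Ob → ℝ} (π : GPolicy St Ob Ac)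
    {s : ℕ → St} {o : ℕ → Ob} {a : ℕ → Ac}
    (h0 : modelProbN H μ T Obs s o a = 0) :
    trajProbN H μ T Obs π s o a = 0 := by
  unfold modelProbN at h0
  unfold trajProbN
  rcases mul_eq_zero.mp h0 with h | h
  · simp [h]
  · obtain ⟨k, hk, hf⟩ := Finset.prod_eq_zero_iff.mp h
    refine mul_eq_zero_of_right _ (Finset.prod_eq_zero hk ?_)
    rcases mul_eq_zero.mp hf with h' | h'
    · simp [h']
    · exact mul_eq_zero_of_right _ h'

/-- Performance of the distilled policy: in a POMDP satisfying the
deterministic filter condition (with true decoders `ψ`), if the decoding functions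
`g` are wrong somewhere along the trajectory with probability at most `ε` under the
policy `π̃E` (the expert `πE` composed with the true decoder `ψ`), then the value of
the distilled policy `πE ∘ g` is at least the value of `π̃E` minus `H ε`. -/
theorem stmt_5 [Fintype St] [Fintype Ob] [Fintype Ac]
    [Inhabited St] [Inhabited Ob] [Inhabited Ac]
    (H : ℕ) (hH : 0 < H)
    (μ : St → ℝ) (T : ℕ → St → Ac → St → ℝ) (Obs : ℕ → St → Ob → ℝ)
    (hμ0 : ∀ x, 0 ≤ μ x) (hμs : ∑ x, μ x = 1)
    (hT0 : ∀ h x u y, 0 ≤ T h x u y) (hTs : ∀ h x u, ∑ y, T h x u y = 1)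
    (hO0 : ∀ h x o, 0 ≤ Obs h x o) (hOs : ∀ h x, ∑ o, Obs h x o = 1)
    (r : ℕ → St → Ac → ℝ) (hr0 : ∀ h x u, 0 ≤ r h x u) (hr1 : ∀ h x u, r h x u ≤ 1)
    (s0 : St) (a0 : Ac)
    (ψ : ℕ → St → Ac → Ob → St)
    -- deterministic filter condition: `ψ` correctly decodes the state one step at
    -- a time along every reachable trajectory
    (hψ : ∀ (s : ℕ → St) (o : ℕ → Ob) (a : ℕ → Ac),
      modelProbN H μ T Obs s o a ≠ 0 → ∀ h, h < H →
        ψ h (if h = 0 then s0 else s (h - 1)) (if h = 0 then a0 else a (h - 1)) (o h) = s h)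
    (πE : ℕ → St → Ac → ℝ)
    (hπE0 : ∀ h x b, 0 ≤ πE h x b) (hπEs : ∀ h x, ∑ b, πE h x b = 1)
    (g : ℕ → St → Ac → Ob → St) (ε : ℝ)
    -- the probability, under `π̃E = πE ∘ ψ`, that `g` decodes incorrectly somewhere
    (hg : ∑ t ∈ Finset.univ.filter (fun t : Traj H St Ob Ac =>
          ∃ h, h < H ∧
            g h (if h = 0 then s0 else extN t.1 (h - 1))
              (if h = 0 then a0 else extN t.2.2 (h - 1)) (extN t.2.1 h) ≠ extN t.1 h),
        trajProb H μ T Obs (distill πE ψ s0 a0) t ≤ ε) :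
    pvalue H μ T Obs r (distill πE g s0 a0) ≥
      pvalue H μ T Obs r (distill πE ψ s0 a0) - H * ε := by
  classical
  set p : Traj H St Ob Ac → Prop := fun t =>
    ∃ h, h < H ∧
      g h (if h = 0 then s0 else extN t.1 (h - 1))
        (if h = 0 then a0 else extN t.2.2 (h - 1)) (extN t.2.1 h) ≠ extN t.1 h with hp
  set P : Traj H St Ob Ac → ℝ := fun t => trajProb H μ T Obs (distill πE ψ s0 a0) t with hP
  set Q : Traj H St Ob Ac → ℝ := fun t => trajProb H μ T Obs (distill πE g s0 a0) t with hQ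
  set R : Traj H St Ob Ac → ℝ :=
    fun t => ∑ h ∈ Finset.range H, r h (extN t.1 h) (extN t.2.2 h) with hR
  -- rewrite the hypothesis as a sum of indicators
  rw [Finset.sum_filter] at hg
  have hg' : ∑ t : Traj H St Ob Ac, (if p t then P t else 0) ≤ ε := by
    refine le_trans (le_of_eq (Finset.sum_congr rfl fun t _ => ?_)) hg
    by_cases h : p t <;> simp [h, hp, hP]
  -- nonnegativity of trajectory probabilities
  have hprob0 : ∀ (d : ℕ → St → Ac → Ob → St) (t : Traj H St Ob Ac),
      0 ≤ trajProb H μ T Obs (distill πE d s0 a0) t := by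
    intro d t
    unfold trajProb trajProbN
    refine mul_nonneg (hμ0 _) (Finset.prod_nonneg fun h _ => ?_)
    refine mul_nonneg (mul_nonneg (hO0 _ _ _) ?_) ?_
    · exact hπE0 _ _ _
    · split <;> first | exact hT0 _ _ _ _ | exact zero_le_one
  have hP0 : ∀ t, 0 ≤ P t := fun t => hprob0 ψ t
  have hQ0 : ∀ t, 0 ≤ Q t := fun t => hprob0 g t
  -- reward bounds
  have hR0 : ∀ t, 0 ≤ R t := fun t =>
    Finset.sum_nonneg fun h _ => hr0 _ _ _
  have hRH : ∀ t, R t ≤ (H : ℝ) := by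
    intro t
    calc R t ≤ ∑ h ∈ Finset.range H, (1 : ℝ) :=
          Finset.sum_le_sum fun h _ => hr1 _ _ _
      _ = (H : ℝ) := by simp
  -- on good trajectories the two probabilities agree
  have heq : ∀ t, ¬ p t → Q t = P t := by
    intro t ht
    simp only [hP, hQ]
    unfold trajProb
    by_cases hm : modelProbN H μ T Obs (extN t.1) (extN t.2.1) (extN t.2.2) = 0
    · rw [trajProbN_eq_zero _ hm, trajProbN_eq_zero _ hm]
    · have hψc := decSt_eq_of_correct s0 a0 ψ (extN t.1) (extN t.2.1) (extN t.2.2)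
        (hψ _ _ _ hm)
      have hgood : ∀ h, h < H →
          g h (if h = 0 then s0 else extN t.1 (h - 1))
            (if h = 0 then a0 else extN t.2.2 (h - 1)) (extN t.2.1 h) = extN t.1 h := by
        intro h hh
        by_contra hc
        exact ht ⟨h, hh, hc⟩
      have hgc := decSt_eq_of_correct s0 a0 g (extN t.1) (extN t.2.1) (extN t.2.2) hgood
      unfold trajProbN
      congr 1
      refine Finset.prod_congr rfl fun h hh => ?_
      have hh' : h < H := Finset.mem_range.mp hh
      simp [distill, hψc h hh', hgc h hh']
  -- main chain of inequalities
  have hpv_g : pvalue H μ T Obs r (distill πE g s0 a0) = ∑ t, Q t * R t := rfl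
  have hpv_ψ : pvalue H μ T Obs r (distill πE ψ s0 a0) = ∑ t, P t * R t := rfl
  have step1 : ∑ t, (if p t then (0:ℝ) else P t * R t) ≤ ∑ t, Q t * R t := by
    refine Finset.sum_le_sum fun t _ => ?_
    by_cases h : p t
    · simp only [h, if_pos]
      exact mul_nonneg (hQ0 t) (hR0 t)
    · simp [h, heq t h]
  have step2 : ∑ t, (if p t then P t * R t else 0) + ∑ t, (if p t then (0:ℝ) else P t * R t)
      = ∑ t, P t * R t := by
    rw [← Finset.sum_add_distrib]
    refine Finset.sum_congr rfl fun t _ => ?_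
    by_cases h : p t <;> simp [h]
  have step3 : ∑ t, (if p t then P t * R t else 0) ≤ (H : ℝ) * ε := by
    calc ∑ t, (if p t then P t * R t else 0)
        ≤ ∑ t, (if p t then P t * (H : ℝ) else 0) := by
          refine Finset.sum_le_sum fun t _ => ?_
          by_cases h : p t
          · simp only [h, if_pos]
            exact mul_le_mul_of_nonneg_left (hRH t) (hP0 t)
          · simp [h]
      _ = (H : ℝ) * ∑ t, (if p t then P t else 0) := by
          rw [Finset.mul_sum]
          refine Finset.sum_congr rfl fun t _ => ?_
          by_cases h : p t <;> simp [h] <;> ring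
      _ ≤ (H : ℝ) * ε := by
          exact mul_le_mul_of_nonneg_left hg' (Nat.cast_nonneg H)
  rw [ge_iff_le, hpv_g, hpv_ψ]
  linarith

end Distill
end

section
/- In a finite-horizon POMDP, the deterministic filter condition (existence of functions $\psi_h : \mathcal{S} \times \mathcal{A} \times \mathcal{O} \to \mathcal{S}$ such that for every reachable $(s_{h-1}, a_{h-1}, o_h)$ the Bayesian belief update of a point-mass belief at $s_{h-1}$ is a point mass at $\psi_h(s_{h-1}, a_{h-1}, o_h)$, and similarly $\psi_1$ for the first step) is equivalent to the history-decodability condition: for each $h \in [H]$ there exists a function $\phi_h : \mathcal{T}_h \to \mathcal{S}$ on observation-action histories such that $\mathbb{P}^{\mathcal{P}}(s_h = \phi_h(\tau_h) \mid \tau_h) = 1$ for every reachable history $\tau_h$. -/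
open Finset

section Filter

variable {St Ob Ac : Type*}

/-- The Bayes operator `B_h(b; o)`: condition the belief `b` on observing `o` at
step `h`. -/
noncomputable def bayesOp [Fintype St] (Obs : ℕ → St → Ob → ℝ) (h : ℕ)
    (b : St → ℝ) (o : Ob) : St → ℝ :=
  fun x => Obs h x o * b x / ∑ z, Obs h z o * b z

/-- The belief update operator `U_h(b; a, o)`: push the belief `b` (over the state
at step `h - 1`) through the transition under action `a` and condition on the
observation `o` at step `h`. -/
noncomputable def beliefUpdate [Fintype St] (T : ℕ → St → Ac → St → ℝ)
    (Obs : ℕ → St → Ob → ℝ) (h : ℕ) (b : St → ℝ) (a : Ac) (o : Ob) : St → ℝ :=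
  bayesOp Obs h (fun x => ∑ z, b z * T (h - 1) z a x) o

/-- Point-mass (one-hot) belief at a state. -/
def pointMass [DecidableEq St] (s : St) : St → ℝ := fun x => if x = s then 1 else 0

section Aux

/-- Nonzero model probability yields nonzero individual factors. -/
private lemma modelProb_factors {H : ℕ}
    {μ : St → ℝ} {T : ℕ → St → Ac → St → ℝ} {Obs : ℕ → St → Ob → ℝ}
    {s : ℕ → St} {o : ℕ → Ob} {a : ℕ → Ac}
    (h : modelProbN H μ T Obs s o a ≠ 0) :
    μ (s 0) ≠ 0 ∧ (∀ k, k < H → Obs k (s k) (o k) ≠ 0) ∧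
      (∀ k, k + 1 < H → T k (s k) (a k) (s (k + 1)) ≠ 0) := by
  unfold modelProbN at h
  rw [mul_ne_zero_iff] at h
  obtain ⟨h1, h2⟩ := h
  rw [Finset.prod_ne_zero_iff] at h2
  refine ⟨h1, fun k hk => (mul_ne_zero_iff.mp (h2 k (Finset.mem_range.mpr hk))).1,
    fun k hk => ?_⟩
  have := (mul_ne_zero_iff.mp (h2 k (Finset.mem_range.mpr (by omega)))).2
  rwa [if_pos hk] at this

/-- Simple recursion on `ℕ`. -/
private noncomputable def seqRec {α : Type*} (init : α) (step : ℕ → α → α) : ℕ → α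
  | 0 => init
  | n + 1 => step n (seqRec init step n)

/-- Any positive-probability prefix extends to a full trajectory of nonzero
model probability (keeping the action sequence). -/
private lemma extend_traj [Fintype St] [Fintype Ob] {H : ℕ}
    (μ : St → ℝ) (T : ℕ → St → Ac → St → ℝ) (Obs : ℕ → St → Ob → ℝ)
    (hTs : ∀ h x u, ∑ y, T h x u y = 1) (hOs : ∀ h x, ∑ ob, Obs h x ob = 1)
    (k : ℕ) (s : ℕ → St) (o : ℕ → Ob) (a : ℕ → Ac)
    (hμ : μ (s 0) ≠ 0)
    (hObs : ∀ h ≤ k, Obs h (s h) (o h) ≠ 0)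
    (hT : ∀ h < k, T h (s h) (a h) (s (h + 1)) ≠ 0) :
    ∃ (s' : ℕ → St) (o' : ℕ → Ob), (∀ j ≤ k, s' j = s j) ∧ (∀ j ≤ k, o' j = o j) ∧
      modelProbN H μ T Obs s' o' a ≠ 0 := by
  classical
  have hTex : ∀ h x, ∃ y, T h x (a h) y ≠ 0 := by
    intro h x
    by_contra hc
    push_neg at hc
    have h0 : ∑ y, T h x (a h) y = 0 := Finset.sum_eq_zero fun y _ => hc y
    rw [hTs] at h0
    norm_num at h0
  have hOex : ∀ h x, ∃ ob, Obs h x ob ≠ 0 := by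
    intro h x
    by_contra hc
    push_neg at hc
    have h0 : ∑ ob, Obs h x ob = 0 := Finset.sum_eq_zero fun ob _ => hc ob
    rw [hOs] at h0
    norm_num at h0
  set s' : ℕ → St :=
    seqRec (s 0) (fun n x => if n + 1 ≤ k then s (n + 1) else (hTex n x).choose) with hs'def
  have hs'succ : ∀ n,
      s' (n + 1) = if n + 1 ≤ k then s (n + 1) else (hTex n (s' n)).choose := fun n => rfl
  have hs' : ∀ j ≤ k, s' j = s j := by
    intro j hj
    cases j with
    | zero => rfl
    | succ n => rw [hs'succ, if_pos hj]
  set o' : ℕ → Ob := fun j => if j ≤ k then o j else (hOex j (s' j)).choose with ho'def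
  have ho' : ∀ j ≤ k, o' j = o j := fun j hj => if_pos hj
  refine ⟨s', o', hs', ho', ?_⟩
  unfold modelProbN
  apply mul_ne_zero
  · rw [hs' 0 (Nat.zero_le k)]; exact hμ
  · rw [Finset.prod_ne_zero_iff]
    intro h _
    apply mul_ne_zero
    · by_cases hh : h ≤ k
      · rw [hs' h hh, ho' h hh]; exact hObs h hh
      · have heq : o' h = (hOex h (s' h)).choose := if_neg hh
        rw [heq]; exact (hOex h (s' h)).choose_spec
    · by_cases hh1 : h + 1 < H
      · rw [if_pos hh1]
        by_cases hhk : h + 1 ≤ k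
        · rw [hs' h (by omega), hs' (h + 1) hhk]; exact hT h (by omega)
        · rw [hs'succ h, if_neg hhk]; exact (hTex h (s' h)).choose_spec
      · rw [if_neg hh1]; exact one_ne_zero

/-- If `bayesOp` of a belief is a point mass at `c`, then any state of nonzero
posterior weight equals `c`. -/
private lemma eq_of_bayes_pointMass [Fintype St] [DecidableEq St]
    {Obs : ℕ → St → Ob → ℝ} {h : ℕ} {b : St → ℝ} {o : Ob} {c y : St}
    (hnn : ∀ z, 0 ≤ Obs h z o * b z) (hy : Obs h y o * b y ≠ 0)
    (heq : bayesOp Obs h b o = pointMass c) : y = c := by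
  have hD : 0 < ∑ z, Obs h z o * b z :=
    Finset.sum_pos' (fun z _ => hnn z)
      ⟨y, Finset.mem_univ y, lt_of_le_of_ne (hnn y) (Ne.symm hy)⟩
  have hval := congrFun heq y
  simp only [bayesOp] at hval
  have hne : Obs h y o * b y / (∑ z, Obs h z o * b z) ≠ 0 :=
    div_ne_zero hy (ne_of_gt hD)
  rw [hval] at hne
  simp only [pointMass, ne_eq, ite_eq_right_iff, not_forall] at hne
  exact hne.1

/-- Conversely, if all states of nonzero posterior weight coincide with `c` and
`c` itself has nonzero weight, `bayesOp` is the point mass at `c`. -/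
private lemma bayes_eq_pointMass [Fintype St] [DecidableEq St]
    {Obs : ℕ → St → Ob → ℝ} {h : ℕ} {b : St → ℝ} {o : Ob} {c : St}
    (hc : Obs h c o * b c ≠ 0) (huniq : ∀ y, Obs h y o * b y ≠ 0 → y = c) :
    bayesOp Obs h b o = pointMass c := by
  have hD : ∑ z, Obs h z o * b z = Obs h c o * b c := by
    apply Finset.sum_eq_single c
    · intro y _ hy
      by_contra hne
      exact hy (huniq y hne)
    · intro hcnot
      exact absurd (Finset.mem_univ c) hcnot
  funext y
  simp only [bayesOp, hD, pointMass]
  by_cases hyc : y = c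
  · subst hyc
    rw [div_self hc, if_pos rfl]
  · have hz : Obs h y o * b y = 0 := by
      by_contra hne
      exact hyc (huniq y hne)
    rw [hz, zero_div, if_neg hyc]

/-- Belief update of a point mass is the Bayes operator applied to a transition row. -/
private lemma beliefUpdate_pointMass [Fintype St] [DecidableEq St]
    (T : ℕ → St → Ac → St → ℝ) (Obs : ℕ → St → Ob → ℝ) (h : ℕ) (x : St) (u : Ac) (o : Ob) :
    beliefUpdate T Obs h (pointMass x) u o
      = bayesOp Obs h (fun y => T (h - 1) x u y) o := by
  unfold beliefUpdate
  funext y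
  simp [pointMass, ite_mul, Finset.sum_ite_eq']

/-- The decoder on histories built from step decoders. -/
private noncomputable def phiRec (ψ0 : Ob → St) (ψ : ℕ → St → Ac → Ob → St)
    (o : ℕ → Ob) (a : ℕ → Ac) : ℕ → St
  | 0 => ψ0 (o 0)
  | k + 1 => ψ (k + 1) (phiRec ψ0 ψ o a k) (a k) (o (k + 1))

private lemma phiRec_causal (ψ0 : Ob → St) (ψ : ℕ → St → Ac → Ob → St) :
    ∀ (k : ℕ) (o o' : ℕ → Ob) (a a' : ℕ → Ac),
      (∀ j, j ≤ k → o j = o' j) → (∀ j, j < k → a j = a' j) →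
      phiRec ψ0 ψ o a k = phiRec ψ0 ψ o' a' k := by
  intro k
  induction k with
  | zero =>
    intro o o' a a' ho _
    simp only [phiRec, ho 0 le_rfl]
  | succ n ih =>
    intro o o' a a' ho ha
    simp only [phiRec]
    rw [ih o o' a a' (fun j hj => ho j (by omega)) (fun j hj => ha j (by omega)),
      ho (n + 1) le_rfl, ha n (by omega)]

end Aux

/-- Equivalence of the deterministic filter condition (belief
updates of point-mass beliefs stay point masses, via some unknown decoders
`ψ₀, ψ` on reachable data) with history decodability (some causal functions `φ_h`
of the observation-action history determine the state with probability one along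
every reachable trajectory). -/
theorem stmt_11 [Fintype St] [DecidableEq St] [Fintype Ob] [Fintype Ac]
    (H : ℕ) (hH : 0 < H)
    (μ : St → ℝ) (T : ℕ → St → Ac → St → ℝ) (Obs : ℕ → St → Ob → ℝ)
    (hμ0 : ∀ x, 0 ≤ μ x) (hμs : ∑ x, μ x = 1)
    (hT0 : ∀ h x u y, 0 ≤ T h x u y) (hTs : ∀ h x u, ∑ y, T h x u y = 1)
    (hO0 : ∀ h x o, 0 ≤ Obs h x o) (hOs : ∀ h x, ∑ o, Obs h x o = 1) :
    ((∃ ψ0 : Ob → St, ∃ ψ : ℕ → St → Ac → Ob → St,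
        (∀ o1 : Ob,
          (∃ (s : ℕ → St) (o : ℕ → Ob) (a : ℕ → Ac),
              modelProbN H μ T Obs s o a ≠ 0 ∧ o 0 = o1) →
          bayesOp Obs 0 μ o1 = pointMass (ψ0 o1)) ∧
        (∀ k, 0 < k → k < H → ∀ (x : St) (u : Ac) (ob : Ob),
          (∃ (s : ℕ → St) (o : ℕ → Ob) (a : ℕ → Ac),
              modelProbN H μ T Obs s o a ≠ 0 ∧ s (k - 1) = x ∧ a (k - 1) = u ∧ o k = ob) →
          beliefUpdate T Obs k (pointMass x) u ob = pointMass (ψ k x u ob))) ↔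
      (∃ φ : ℕ → (ℕ → Ob) → (ℕ → Ac) → St,
        (∀ k, k < H → ∀ (o o' : ℕ → Ob) (a a' : ℕ → Ac),
          (∀ j, j ≤ k → o j = o' j) → (∀ j, j < k → a j = a' j) → φ k o a = φ k o' a') ∧
        ∀ (s : ℕ → St) (o : ℕ → Ob) (a : ℕ → Ac),
          modelProbN H μ T Obs s o a ≠ 0 → ∀ k, k < H → s k = φ k o a)) := by
  classical
  constructor
  · rintro ⟨ψ0, ψ, hψ0, hψ⟩
    refine ⟨fun k o a => phiRec ψ0 ψ o a k,
      fun k _ o o' a a' ho ha => phiRec_causal ψ0 ψ k o o' a a' ho ha, ?_⟩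
    intro s o a hmp
    obtain ⟨hμne, hObsne, hTne⟩ := modelProb_factors hmp
    intro k
    induction k with
    | zero =>
      intro _
      have h := hψ0 (o 0) ⟨s, o, a, hmp, rfl⟩
      have := eq_of_bayes_pointMass (b := μ)
        (fun z => mul_nonneg (hO0 0 z (o 0)) (hμ0 z))
        (mul_ne_zero (hObsne 0 hH) hμne) h
      simpa [phiRec] using this
    | succ k ih =>
      intro hk1
      have hk : k < H := by omega
      have h := hψ (k + 1) (Nat.succ_pos k) hk1 (s k) (a k) (o (k + 1))
        ⟨s, o, a, hmp, rfl, rfl, rfl⟩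
      rw [beliefUpdate_pointMass] at h
      have hy : Obs (k + 1) (s (k + 1)) (o (k + 1)) * T k (s k) (a k) (s (k + 1)) ≠ 0 :=
        mul_ne_zero (hObsne (k + 1) hk1) (hTne k hk1)
      have hkey := eq_of_bayes_pointMass (b := fun y => T (k + 1 - 1) (s k) (a k) y)
        (fun z => mul_nonneg (hO0 _ _ _) (hT0 _ _ _ _)) hy h
      have ihk : s k = phiRec ψ0 ψ o a k := ih hk
      simp only [phiRec]
      rw [← ihk]
      exact hkey
  · rintro ⟨φ, hφc, hφ⟩
    have hStne : Nonempty St := by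
      by_contra hempty
      rw [not_nonempty_iff] at hempty
      rw [Finset.univ_eq_empty, Finset.sum_empty] at hμs
      norm_num at hμs
    refine ⟨fun o1 => if h : ∃ y, bayesOp Obs 0 μ o1 = pointMass y then h.choose
        else hStne.some,
      fun k x u ob => if h : ∃ y, beliefUpdate T Obs k (pointMass x) u ob = pointMass y
        then h.choose else hStne.some, ?_, ?_⟩
    · rintro o1 ⟨s, o, a, hmp, ho⟩
      subst ho
      obtain ⟨hμne, hObsne, hTne⟩ := modelProb_factors hmp
      have key : bayesOp Obs 0 μ (o 0) = pointMass (s 0) := by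
        apply bayes_eq_pointMass (mul_ne_zero (hObsne 0 hH) hμne)
        intro y hy
        obtain ⟨hOy, hμy⟩ := mul_ne_zero_iff.mp hy
        obtain ⟨s', o', hs', ho', hmp'⟩ := extend_traj (H := H) μ T Obs hTs hOs 0
          (Function.update s 0 y) o a
          (by rw [Function.update_self]; exact hμy)
          (by
            intro h hh
            have : h = 0 := Nat.le_zero.mp hh
            subst this
            rw [Function.update_self]
            exact hOy)
          (by intro h hh; omega)
        have h1 : s' 0 = φ 0 o' a := hφ s' o' a hmp' 0 hH
        have h2 : φ 0 o' a = φ 0 o a := hφc 0 hH o' o a a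
          (fun j hj => by
            have : j = 0 := Nat.le_zero.mp hj
            subst this
            exact ho' 0 le_rfl)
          (fun j hj => by omega)
        have h3 : s 0 = φ 0 o a := hφ s o a hmp 0 hH
        have h4 : s' 0 = y := by rw [hs' 0 le_rfl, Function.update_self]
        rw [← h4, h1, h2, ← h3]
      have hex : ∃ y, bayesOp Obs 0 μ (o 0) = pointMass y := ⟨s 0, key⟩
      show bayesOp Obs 0 μ (o 0)
        = pointMass (if h : ∃ y, bayesOp Obs 0 μ (o 0) = pointMass y then h.choose
            else hStne.some)
      rw [dif_pos hex]
      exact hex.choose_spec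
    · rintro k hk0 hkH x u ob ⟨s, o, a, hmp, hx, hu, ho⟩
      subst hx; subst hu; subst ho
      obtain ⟨hμne, hObsne, hTne⟩ := modelProb_factors hmp
      have hk1 : k - 1 + 1 = k := by omega
      have hTk : T (k - 1) (s (k - 1)) (a (k - 1)) (s k) ≠ 0 := by
        have := hTne (k - 1) (by omega)
        rwa [hk1] at this
      have key : beliefUpdate T Obs k (pointMass (s (k - 1))) (a (k - 1)) (o k)
          = pointMass (s k) := by
        rw [beliefUpdate_pointMass]
        apply bayes_eq_pointMass (b := fun y => T (k - 1) (s (k - 1)) (a (k - 1)) y)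
          (mul_ne_zero (hObsne k hkH) hTk)
        intro y hy
        obtain ⟨hOy, hTy⟩ := mul_ne_zero_iff.mp hy
        obtain ⟨s', o', hs', ho', hmp'⟩ := extend_traj (H := H) μ T Obs hTs hOs k
          (Function.update s k y) o a
          (by rw [Function.update_of_ne (by omega)]; exact hμne)
          (by
            intro h hh
            rcases eq_or_lt_of_le hh with rfl | hlt
            · rw [Function.update_self]; exact hOy
            · rw [Function.update_of_ne (by omega)]; exact hObsne h (by omega))
          (by
            intro h hh
            rcases (by omega : h + 1 = k ∨ h + 1 < k) with heq | hlt
            · have hh' : h = k - 1 := by omega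
              subst hh'
              rw [hk1, Function.update_of_ne (by omega), Function.update_self]
              exact hTy
            · rw [Function.update_of_ne (by omega), Function.update_of_ne (by omega)]
              exact hTne h (by omega))
        have h1 : s' k = φ k o' a := hφ s' o' a hmp' k hkH
        have h2 : φ k o' a = φ k o a := hφc k hkH o' o a a
          (fun j hj => ho' j hj) (fun j _ => rfl)
        have h3 : s k = φ k o a := hφ s o a hmp k hkH
        have h4 : s' k = y := by rw [hs' k le_rfl, Function.update_self]
        rw [← h4, h1, h2, ← h3]
      have hex : ∃ y, beliefUpdate T Obs k (pointMass (s (k - 1))) (a (k - 1)) (o k)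
          = pointMass y := ⟨s k, key⟩
      show beliefUpdate T Obs k (pointMass (s (k - 1))) (a (k - 1)) (o k)
        = pointMass (if h : ∃ y, beliefUpdate T Obs k (pointMass (s (k - 1)))
            (a (k - 1)) (o k) = pointMass y then h.choose else hStne.some)
      rw [dif_pos hex]
      exact hex.choose_spec

end Filter
end

section
/- Let $\mathcal{G}$ be a finite-horizon partially observable stochastic game with $n$ agents satisfying the multi-agent deterministic filter condition (each agent can decode the state from its common plus private information with probability 1). Let $\pi \in \Pi_{\mathcal{S}}$ be a joint Markov state-based policy and let $\hat{\phi} = \{\hat{\phi}_{i,h}\}$ be deterministic decoding functions $\hat{\phi}_{i,h} : \mathcal{C}_h \times \mathcal{P}_{i,h} \to \mathcal{S}$. Let $\pi^{\hat{\phi}}$ be the distilled policy where each agent decodes via $\hat{\phi}_{i,h}$ and then acts via $\pi_{i,h}$. Then for each agent $i$, with rewards in $[0,1]$ per step: $v_i(\pi) - v_i(\pi^{\hat{\phi}}) \leq H \cdot \mathbb{P}^{\pi, \mathcal{G}}(\exists\, j \in [n],\, h \in [H] : s_h \neq \hat{\phi}_{j,h}(c_h, p_{j,h}))$. -/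
open Finset

open Classical in
/-- Single-policy equilibrium distillation bound in a POSG with
information sharing satisfying the multi-agent deterministic filter condition:
for a joint Markov state-based policy `π` and deterministic decoding functions
`φ`, the value loss of each agent `i` when moving from `π` to the distilled
policy `π^φ` (each agent decodes the state from its common and private
information and then acts via `π`) is at most `H` times the probability, under
`π`, that some agent's decoder is wrong at some step. -/
theorem stmt_13 {St Ob C : Type*} {n : ℕ} {AcI : Fin n → Type*} {PI : Fin n → Type*}
    [Fintype St] [Fintype Ob] [∀ i, Fintype (AcI i)]
    [Inhabited St] [Inhabited Ob] [∀ i, Inhabited (AcI i)]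
    (H : ℕ) (hH : 0 < H)
    (μ : St → ℝ) (T : ℕ → St → (∀ i, AcI i) → St → ℝ) (Obs : ℕ → St → Ob → ℝ)
    (hμ0 : ∀ x, 0 ≤ μ x) (hμs : ∑ x, μ x = 1)
    (hT0 : ∀ h x u y, 0 ≤ T h x u y) (hTs : ∀ h x u, ∑ y, T h x u y = 1)
    (hO0 : ∀ h x o, 0 ≤ Obs h x o) (hOs : ∀ h x, ∑ o, Obs h x o = 1)
    -- common- and private-information maps (fixed causal functions of the history)
    (fC : ℕ → (ℕ → Ob) → (ℕ → ∀ i, AcI i) → C)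
    (fP : ∀ i : Fin n, ℕ → (ℕ → Ob) → (ℕ → ∀ i, AcI i) → PI i)
    (hfC : ∀ h (o o' : ℕ → Ob) (a a' : ℕ → ∀ i, AcI i),
      (∀ k, k ≤ h → o k = o' k) → (∀ k, k < h → a k = a' k) → fC h o a = fC h o' a')
    (hfP : ∀ i h (o o' : ℕ → Ob) (a a' : ℕ → ∀ i, AcI i),
      (∀ k, k ≤ h → o k = o' k) → (∀ k, k < h → a k = a' k) → fP i h o a = fP i h o' a')
    -- rewards of each agent, in [0,1]
    (r : Fin n → ℕ → St → (∀ i, AcI i) → ℝ)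
    (hr0 : ∀ i h x u, 0 ≤ r i h x u) (hr1 : ∀ i h x u, r i h x u ≤ 1)
    -- joint Markov state-based (product) policy
    (π : ∀ i : Fin n, ℕ → St → AcI i → ℝ)
    (hπ0 : ∀ i h x b, 0 ≤ π i h x b) (hπs : ∀ i h x, ∑ b, π i h x b = 1)
    -- multi-agent deterministic filter condition: each agent can decode the state
    -- from its information with probability one along reachable trajectories
    (trueφ : ∀ i : Fin n, ℕ → C → PI i → St)
    (hdf : ∀ (s : ℕ → St) (o : ℕ → Ob) (a : ℕ → ∀ i, AcI i),
      modelProbN H μ T Obs s o a ≠ 0 →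
        ∀ i : Fin n, ∀ h, h < H → s h = trueφ i h (fC h o a) (fP i h o a))
    -- arbitrary deterministic decoding functions used for distillation
    (φ : ∀ i : Fin n, ℕ → C → PI i → St) :
    ∀ i : Fin n,
      pvalue H μ T Obs (r i)
          (fun h s _o _a b => ∏ j, π j h (s h) (b j)) -
        pvalue H μ T Obs (r i)
          (fun h _s o a b => ∏ j, π j h (φ j h (fC h o a) (fP j h o a)) (b j)) ≤
      (H : ℝ) * ∑ t ∈ Finset.univ.filter (fun t : Traj H St Ob (∀ i, AcI i) =>
            ∃ j : Fin n, ∃ h, h < H ∧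
              extN t.1 h ≠
                φ j h (fC h (extN t.2.1) (extN t.2.2)) (fP j h (extN t.2.1) (extN t.2.2))),
          trajProb H μ T Obs (fun h s _o _a b => ∏ j, π j h (s h) (b j)) t := by
  intro i
  set π1 : GPolicy St Ob (∀ i, AcI i) :=
    fun h s _o _a b => ∏ j, π j h (s h) (b j) with hπ1
  set π2 : GPolicy St Ob (∀ i, AcI i) :=
    fun h _s o a b => ∏ j, π j h (φ j h (fC h o a) (fP j h o a)) (b j) with hπ2
  set B := Finset.univ.filter (fun t : Traj H St Ob (∀ i, AcI i) =>
      ∃ j : Fin n, ∃ h, h < H ∧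
        extN t.1 h ≠
          φ j h (fC h (extN t.2.1) (extN t.2.2)) (fP j h (extN t.2.1) (extN t.2.2))) with hBdef
  have hf0 : ∀ t, 0 ≤ trajProb H μ T Obs π1 t := by
    intro t
    refine mul_nonneg (hμ0 _) (Finset.prod_nonneg fun h _ => ?_)
    refine mul_nonneg (mul_nonneg (hO0 _ _ _) (Finset.prod_nonneg fun j _ => hπ0 _ _ _ _)) ?_
    split_ifs
    · exact hT0 _ _ _ _
    · exact zero_le_one
  have hg0 : ∀ t, 0 ≤ trajProb H μ T Obs π2 t := by
    intro t
    refine mul_nonneg (hμ0 _) (Finset.prod_nonneg fun h _ => ?_)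
    refine mul_nonneg (mul_nonneg (hO0 _ _ _) (Finset.prod_nonneg fun j _ => hπ0 _ _ _ _)) ?_
    split_ifs
    · exact hT0 _ _ _ _
    · exact zero_le_one
  have hR0 : ∀ t : Traj H St Ob (∀ i, AcI i),
      0 ≤ ∑ h ∈ Finset.range H, r i h (extN t.1 h) (extN t.2.2 h) :=
    fun t => Finset.sum_nonneg fun h _ => hr0 _ _ _ _
  have hRH : ∀ t : Traj H St Ob (∀ i, AcI i),
      ∑ h ∈ Finset.range H, r i h (extN t.1 h) (extN t.2.2 h) ≤ (H : ℝ) := by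
    intro t
    calc ∑ h ∈ Finset.range H, r i h (extN t.1 h) (extN t.2.2 h)
        ≤ ∑ _h ∈ Finset.range H, (1 : ℝ) := Finset.sum_le_sum fun h _ => hr1 _ _ _ _
      _ = (H : ℝ) := by simp
  have heq : ∀ t ∉ B, trajProb H μ T Obs π1 t = trajProb H μ T Obs π2 t := by
    intro t ht
    simp only [hBdef, Finset.mem_filter, Finset.mem_univ, true_and, not_exists] at ht
    push_neg at ht
    unfold trajProb trajProbN
    congr 1
    refine Finset.prod_congr rfl fun h hh => ?_
    rw [Finset.mem_range] at hh
    congr 1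
    congr 1
    exact Finset.prod_congr rfl fun j _ => by rw [ht j h hh]
  unfold pvalue
  rw [← Finset.sum_sub_distrib]
  rw [← Finset.sum_subset (Finset.subset_univ B)
    (fun t _ ht => by rw [heq t ht]; ring)]
  calc ∑ t ∈ B, (trajProb H μ T Obs π1 t *
          ∑ h ∈ Finset.range H, r i h (extN t.1 h) (extN t.2.2 h) -
        trajProb H μ T Obs π2 t *
          ∑ h ∈ Finset.range H, r i h (extN t.1 h) (extN t.2.2 h))
      ≤ ∑ t ∈ B, trajProb H μ T Obs π1 t * (H : ℝ) := by
        refine Finset.sum_le_sum fun t _ => ?_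
        have h1 : trajProb H μ T Obs π1 t *
            (∑ h ∈ Finset.range H, r i h (extN t.1 h) (extN t.2.2 h)) ≤
            trajProb H μ T Obs π1 t * (H : ℝ) :=
          mul_le_mul_of_nonneg_left (hRH t) (hf0 t)
        have h2 : 0 ≤ trajProb H μ T Obs π2 t *
            (∑ h ∈ Finset.range H, r i h (extN t.1 h) (extN t.2.2 h)) :=
          mul_nonneg (hg0 t) (hR0 t)
        linarith
    _ = (H : ℝ) * ∑ t ∈ B, trajProb H μ T Obs π1 t := by
        rw [Finset.mul_sum]; exact Finset.sum_congr rfl fun t _ => mul_comm _ _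
end

section
/- Let $\mathcal{G}$ be a POSG satisfying the deterministic filter condition, and suppose the per-step rewards lie in $[0,1]$. Given a joint Markov policy $\pi \in \Pi_{\mathcal{S}}$ and possibly stochastic decoding functions $\hat{g} = \{\hat{g}_{i,h}\}$, the NE/CCE gap of the distilled policy $\pi^{\hat{g}}$ satisfies $\mathrm{NE/CCE\text{-}gap}(\pi^{\hat{g}}) - \mathrm{NE/CCE\text{-}gap}(\pi) \leq 2 n H^2 \max_{i \in [n]} \max_{u_i \in \Pi_i} \max_{j \in [n], h \in [H]} \mathbb{P}^{u_i \times \pi_{-i}, \mathcal{G}}(s_h \neq \hat{g}_{j,h}(c_h, p_{j,h}))$. -/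
open Finset

section AuxLemmas

open Finset

variable {St Ob Ac : Type*}

lemma extN_lt {α : Type*} [Inhabited α] {H : ℕ} (f : Fin H → α) {k : ℕ} (hk : k < H) :
    extN f k = f ⟨k, hk⟩ := dif_pos hk

lemma extN_snoc_lt {α : Type*} [Inhabited α] {H : ℕ} (f : Fin H → α) (x : α) {k : ℕ}
    (hk : k < H) : extN (Fin.snoc f x : Fin (H+1) → α) k = extN f k := by
  rw [extN_lt (Fin.snoc f x) (Nat.lt_succ_of_lt hk), extN_lt f hk]
  simp [Fin.snoc, hk]

lemma extN_snoc_last {α : Type*} [Inhabited α] {H : ℕ} (f : Fin H → α) (x : α) :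
    extN (Fin.snoc f x : Fin (H+1) → α) H = x := by
  rw [extN_lt (Fin.snoc f x) (Nat.lt_succ_self H)]
  simp [Fin.snoc]

lemma trajProbN_factor (H : ℕ) (μ : St → ℝ) (T : ℕ → St → Ac → St → ℝ)
    (Obs : ℕ → St → Ob → ℝ) (π : GPolicy St Ob Ac) (s : ℕ → St) (o : ℕ → Ob) (a : ℕ → Ac) :
    trajProbN H μ T Obs π s o a
      = modelProbN H μ T Obs s o a * ∏ h ∈ Finset.range H, π h s o a (a h) := by
  unfold trajProbN modelProbN
  rw [mul_assoc, ← Finset.prod_mul_distrib]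
  exact congrArg (μ (s 0) * ·) (Finset.prod_congr rfl fun h _ => by ring)

lemma modelProbN_nonneg (H : ℕ) (μ : St → ℝ) (T : ℕ → St → Ac → St → ℝ)
    (Obs : ℕ → St → Ob → ℝ) (hμ0 : ∀ x, 0 ≤ μ x) (hT0 : ∀ h x u y, 0 ≤ T h x u y)
    (hO0 : ∀ h x ob, 0 ≤ Obs h x ob) (s : ℕ → St) (o : ℕ → Ob) (a : ℕ → Ac) :
    0 ≤ modelProbN H μ T Obs s o a := by
  refine mul_nonneg (hμ0 _) (Finset.prod_nonneg fun h _ => mul_nonneg (hO0 _ _ _) ?_)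
  split <;> [exact hT0 _ _ _ _; exact zero_le_one]

lemma trajProbN_nonneg (H : ℕ) (μ : St → ℝ) (T : ℕ → St → Ac → St → ℝ)
    (Obs : ℕ → St → Ob → ℝ) (π : GPolicy St Ob Ac)
    (hμ0 : ∀ x, 0 ≤ μ x) (hT0 : ∀ h x u y, 0 ≤ T h x u y)
    (hO0 : ∀ h x ob, 0 ≤ Obs h x ob) (hπ0 : ∀ h s o a b, 0 ≤ π h s o a b)
    (s : ℕ → St) (o : ℕ → Ob) (a : ℕ → Ac) :
    0 ≤ trajProbN H μ T Obs π s o a := by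
  rw [trajProbN_factor]
  exact mul_nonneg (modelProbN_nonneg H μ T Obs hμ0 hT0 hO0 s o a)
    (Finset.prod_nonneg fun h _ => hπ0 _ _ _ _ _)

lemma sum_fun_snoc {α β : Type*} [Fintype α] [AddCommMonoid β] {H : ℕ}
    (F : (Fin (H+1) → α) → β) :
    ∑ f : Fin (H+1) → α, F f = ∑ f : Fin H → α, ∑ x : α, F (Fin.snoc f x) := by
  rw [← (Fin.insertNthEquiv (fun _ => α) (Fin.last H)).sum_comp F, Fintype.sum_prod_type]
  rw [Finset.sum_comm]
  refine Finset.sum_congr rfl fun f _ => Finset.sum_congr rfl fun x _ => ?_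
  simp [Fin.insertNthEquiv_last, Fin.snocEquiv]

lemma one_sub_prod_le {ι : Type*} (K : Finset ι) (q : ι → ℝ)
    (h0 : ∀ k ∈ K, 0 ≤ q k) (h1 : ∀ k ∈ K, q k ≤ 1) :
    1 - ∏ k ∈ K, q k ≤ ∑ k ∈ K, (1 - q k) := by
  induction K using Finset.cons_induction with
  | empty => simp
  | cons k K hk IH =>
    rw [Finset.prod_cons, Finset.sum_cons]
    have hP0 : 0 ≤ ∏ j ∈ K, q j :=
      Finset.prod_nonneg fun j hj => h0 j (Finset.mem_cons_of_mem hj)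
    have hP1 : ∏ j ∈ K, q j ≤ 1 :=
      Finset.prod_le_one (fun j hj => h0 j (Finset.mem_cons_of_mem hj))
        (fun j hj => h1 j (Finset.mem_cons_of_mem hj))
    have hIH := IH (fun j hj => h0 j (Finset.mem_cons_of_mem hj))
      (fun j hj => h1 j (Finset.mem_cons_of_mem hj))
    have hk0 := h0 k (Finset.mem_cons_self k K)
    have hk1 := h1 k (Finset.mem_cons_self k K)
    nlinarith

end AuxLemmas
section Norm

open Finset

lemma sum_fun_one {X β : Type*} [Fintype X] [AddCommMonoid β] (G : (Fin 1 → X) → β) :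
    ∑ f : Fin 1 → X, G f = ∑ x : X, G (fun _ => x) := by
  rw [← (Equiv.funUnique (Fin 1) X).symm.sum_comp G]
  rfl

lemma triple_snoc_sum {St Ob Ac : Type*} [Fintype St] [Fintype Ob] [Fintype Ac] {H : ℕ}
    (F : (Fin (H+1) → St) → (Fin (H+1) → Ob) → (Fin (H+1) → Ac) → ℝ) :
    (∑ s : Fin (H+1) → St, ∑ o : Fin (H+1) → Ob, ∑ a : Fin (H+1) → Ac, F s o a)
      = ∑ s : Fin H → St, ∑ o : Fin H → Ob, ∑ a : Fin H → Ac,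
          ∑ x : St, ∑ y : Ob, ∑ z : Ac, F (Fin.snoc s x) (Fin.snoc o y) (Fin.snoc a z) := by
  rw [sum_fun_snoc (F := fun s => ∑ o, ∑ a, F s o a)]
  refine Finset.sum_congr rfl fun s _ => ?_
  have h1 : ∀ x : St, (∑ o : Fin (H+1) → Ob, ∑ a : Fin (H+1) → Ac, F (Fin.snoc s x) o a)
      = ∑ o : Fin H → Ob, ∑ a : Fin H → Ac, ∑ y : Ob, ∑ z : Ac,
          F (Fin.snoc s x) (Fin.snoc o y) (Fin.snoc a z) := by
    intro x
    rw [sum_fun_snoc (F := fun o => ∑ a, F (Fin.snoc s x) o a)]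
    refine Finset.sum_congr rfl fun o _ => ?_
    have h2 : ∀ y : Ob, (∑ a : Fin (H+1) → Ac, F (Fin.snoc s x) (Fin.snoc o y) a)
        = ∑ a : Fin H → Ac, ∑ z : Ac, F (Fin.snoc s x) (Fin.snoc o y) (Fin.snoc a z) :=
      fun y => sum_fun_snoc _
    rw [Finset.sum_congr rfl fun y _ => h2 y, Finset.sum_comm]
  rw [Finset.sum_congr rfl fun x _ => h1 x, Finset.sum_comm]
  refine Finset.sum_congr rfl fun o _ => ?_
  rw [Finset.sum_comm]

lemma IsPolicy.mono {St Ob Ac : Type*} [Fintype Ac] {H : ℕ} {π : GPolicy St Ob Ac}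
    (h : IsPolicy (H+1) π) : IsPolicy H π :=
  ⟨fun h' hh' => h.1 h' (Nat.lt_succ_of_lt hh'), h.2⟩

lemma sum_trajProbN_one {St Ob Ac : Type*} [Fintype St] [Fintype Ob] [Fintype Ac]
    [Inhabited St] [Inhabited Ob] [Inhabited Ac]
    (H : ℕ) (hH : 0 < H) (μ : St → ℝ) (T : ℕ → St → Ac → St → ℝ) (Obs : ℕ → St → Ob → ℝ)
    (hμs : ∑ x, μ x = 1) (hTs : ∀ h x u, ∑ y, T h x u y = 1)
    (hOs : ∀ h x, ∑ ob, Obs h x ob = 1)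
    (π : GPolicy St Ob Ac) (hπ : IsPolicy H π) :
    ∑ s : Fin H → St, ∑ o : Fin H → Ob, ∑ a : Fin H → Ac,
      trajProbN H μ T Obs π (extN s) (extN o) (extN a) = 1 := by
  induction H, hH using Nat.le_induction generalizing π with
  | base =>
    have key : ∀ x : St, ∀ y : Ob,
        (∑ z : Ac, trajProbN 1 μ T Obs π (extN (fun _ => x : Fin 1 → St))
          (extN (fun _ => y : Fin 1 → Ob)) (extN (fun _ => z : Fin 1 → Ac)))
        = μ x * Obs 0 x y := by
      intro x y
      have hx0 : extN (fun _ => x : Fin 1 → St) 0 = x := extN_lt _ one_pos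
      have hy0 : extN (fun _ => y : Fin 1 → Ob) 0 = y := extN_lt _ one_pos
      have hπc : ∀ z : Ac, π 0 (extN (fun _ => x : Fin 1 → St))
          (extN (fun _ => y : Fin 1 → Ob)) (extN (fun _ => z : Fin 1 → Ac))
          = π 0 (extN (fun _ => x : Fin 1 → St)) (extN (fun _ => y : Fin 1 → Ob))
              (fun _ => default) := by
        intro z
        exact hπ.1 0 one_pos _ _ _ _ _ _ (fun _ _ => rfl) (fun _ _ => rfl)
          (fun k hk => absurd hk (Nat.not_lt_zero k))
      have hz0 : ∀ z : Ac, extN (fun _ => z : Fin 1 → Ac) 0 = z := fun z => extN_lt _ one_pos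
      unfold trajProbN
      simp only [Finset.prod_range_one, hx0, hy0, hz0, hπc, if_neg (lt_irrefl 1), mul_one]
      simp only [← Finset.mul_sum]
      rw [(hπ.2 0 _ _ _).2, mul_one]
    rw [sum_fun_one]
    have hrow : ∀ x : St,
        (∑ o : Fin 1 → Ob, ∑ a : Fin 1 → Ac, trajProbN 1 μ T Obs π
          (extN (fun _ => x : Fin 1 → St)) (extN o) (extN a)) = μ x := by
      intro x
      rw [sum_fun_one]
      have : ∀ y : Ob, (∑ a : Fin 1 → Ac, trajProbN 1 μ T Obs π
          (extN (fun _ => x : Fin 1 → St)) (extN (fun _ => y : Fin 1 → Ob)) (extN a))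
          = μ x * Obs 0 x y := by
        intro y
        rw [sum_fun_one]
        exact key x y
      rw [Finset.sum_congr rfl fun y _ => this y, ← Finset.mul_sum, hOs 0 x, mul_one]
    rw [Finset.sum_congr rfl fun x _ => hrow x, hμs]
  | succ H hH1 IH =>
    obtain ⟨m, rfl⟩ : ∃ m, H = m + 1 := ⟨H - 1, (Nat.succ_pred_eq_of_pos hH1).symm⟩
    rw [triple_snoc_sum]
    have key : ∀ (s : Fin (m+1) → St) (o : Fin (m+1) → Ob) (a : Fin (m+1) → Ac),
        (∑ x : St, ∑ y : Ob, ∑ z : Ac, trajProbN (m+1+1) μ T Obs π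
          (extN (Fin.snoc s x)) (extN (Fin.snoc o y)) (extN (Fin.snoc a z)))
        = trajProbN (m+1) μ T Obs π (extN s) (extN o) (extN a) := by
      intro s o a
      have fact : ∀ (x : St) (y : Ob) (z : Ac),
          trajProbN (m+1+1) μ T Obs π
            (extN (Fin.snoc s x)) (extN (Fin.snoc o y)) (extN (Fin.snoc a z))
          = trajProbN (m+1) μ T Obs π (extN s) (extN o) (extN a)
            * (T m (extN s m) (extN a m) x
               * (Obs (m+1) x y
                  * π (m+1) (extN (Fin.snoc s x)) (extN (Fin.snoc o y)) (extN a) z)) := by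
        intro x y z
        have hs : ∀ k, k < m + 1 → extN (Fin.snoc s x : Fin (m+1+1) → St) k = extN s k :=
          fun k hk => extN_snoc_lt s x hk
        have ho : ∀ k, k < m + 1 → extN (Fin.snoc o y : Fin (m+1+1) → Ob) k = extN o k :=
          fun k hk => extN_snoc_lt o y hk
        have ha : ∀ k, k < m + 1 → extN (Fin.snoc a z : Fin (m+1+1) → Ac) k = extN a k :=
          fun k hk => extN_snoc_lt a z hk
        have hsl : extN (Fin.snoc s x : Fin (m+1+1) → St) (m+1) = x := extN_snoc_last s x
        have hol : extN (Fin.snoc o y : Fin (m+1+1) → Ob) (m+1) = y := extN_snoc_last o y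
        have hal : extN (Fin.snoc a z : Fin (m+1+1) → Ac) (m+1) = z := extN_snoc_last a z
        have hπlast : π (m+1) (extN (Fin.snoc s x)) (extN (Fin.snoc o y))
            (extN (Fin.snoc a z)) = π (m+1) (extN (Fin.snoc s x)) (extN (Fin.snoc o y))
            (extN a) := by
          refine hπ.1 (m+1) (Nat.lt_succ_self _) _ _ _ _ _ _
            (fun _ _ => rfl) (fun _ _ => rfl) (fun k hk => ha k hk)
        have hπmid : ∀ h, h < m + 1 → π h (extN (Fin.snoc s x)) (extN (Fin.snoc o y))
            (extN (Fin.snoc a z)) = π h (extN s) (extN o) (extN a) := by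
          intro h hh
          exact hπ.1 h (Nat.lt_succ_of_lt hh) _ _ _ _ _ _
            (fun k hk => hs k (lt_of_le_of_lt hk hh))
            (fun k hk => ho k (lt_of_le_of_lt hk hh))
            (fun k hk => ha k (lt_of_lt_of_le hk (le_of_lt hh)))
        unfold trajProbN
        rw [Finset.prod_range_succ]
        have hsplit : ∀ h ∈ Finset.range (m+1),
            (Obs h (extN (Fin.snoc s x) h) (extN (Fin.snoc o y) h)
              * π h (extN (Fin.snoc s x)) (extN (Fin.snoc o y)) (extN (Fin.snoc a z))
                  (extN (Fin.snoc a z) h)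
              * (if h + 1 < m+1+1 then T h (extN (Fin.snoc s x) h)
                  (extN (Fin.snoc a z) h) (extN (Fin.snoc s x) (h+1)) else 1))
            = (Obs h (extN s h) (extN o h)
                * π h (extN s) (extN o) (extN a) (extN a h)
                * (if h + 1 < m+1 then T h (extN s h) (extN a h) (extN s (h+1)) else 1))
              * (if h = m then T m (extN s m) (extN a m) x else 1) := by
          intro h hh
          rw [Finset.mem_range] at hh
          rw [hs h hh, ho h hh, ha h hh, hπmid h hh]
          rcases Nat.lt_succ_iff_lt_or_eq.mp hh with hlt | heq
          · rw [if_pos (by omega), if_pos (by omega), if_neg (by omega),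
              hs (h+1) (by omega), mul_one]
          · subst heq
            rw [if_pos (by omega), if_neg (by omega), if_pos rfl, hsl, mul_one]
        rw [Finset.prod_congr rfl hsplit, Finset.prod_mul_distrib,
          Finset.prod_ite_eq' (Finset.range (m+1)) m
            (fun _ => T m (extN s m) (extN a m) x),
          if_pos (Finset.self_mem_range_succ m), hsl, hol, hal, hπlast,
          hs 0 (Nat.succ_pos m), if_neg (lt_irrefl (m+1+1)), mul_one]
        ring
      rw [Finset.sum_congr rfl fun x _ => Finset.sum_congr rfl fun y _ =>
        Finset.sum_congr rfl fun z _ => fact x y z]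
      have step1 : ∀ (x : St) (y : Ob),
          (∑ z : Ac, trajProbN (m+1) μ T Obs π (extN s) (extN o) (extN a)
            * (T m (extN s m) (extN a m) x * (Obs (m+1) x y
              * π (m+1) (extN (Fin.snoc s x)) (extN (Fin.snoc o y)) (extN a) z)))
          = trajProbN (m+1) μ T Obs π (extN s) (extN o) (extN a)
            * (T m (extN s m) (extN a m) x * Obs (m+1) x y) := by
        intro x y
        simp only [← Finset.mul_sum]
        rw [(hπ.2 (m+1) _ _ _).2, mul_one]
      rw [Finset.sum_congr rfl fun x _ => Finset.sum_congr rfl fun y _ => step1 x y]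
      have step2 : ∀ x : St,
          (∑ y : Ob, trajProbN (m+1) μ T Obs π (extN s) (extN o) (extN a)
            * (T m (extN s m) (extN a m) x * Obs (m+1) x y))
          = trajProbN (m+1) μ T Obs π (extN s) (extN o) (extN a)
            * T m (extN s m) (extN a m) x := by
        intro x
        simp only [← Finset.mul_sum]
        rw [hOs (m+1) x, mul_one]
      rw [Finset.sum_congr rfl fun x _ => step2 x, ← Finset.mul_sum,
        hTs m (extN s m) (extN a m), mul_one]
    rw [Finset.sum_congr rfl fun s _ => Finset.sum_congr rfl fun o _ =>
      Finset.sum_congr rfl fun a _ => key s o a]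
    exact IH π (IsPolicy.mono hπ)

lemma sum_trajProb_one {St Ob Ac : Type*} [Fintype St] [Fintype Ob] [Fintype Ac]
    [Inhabited St] [Inhabited Ob] [Inhabited Ac]
    (H : ℕ) (hH : 0 < H) (μ : St → ℝ) (T : ℕ → St → Ac → St → ℝ) (Obs : ℕ → St → Ob → ℝ)
    (hμs : ∑ x, μ x = 1) (hTs : ∀ h x u, ∑ y, T h x u y = 1)
    (hOs : ∀ h x, ∑ ob, Obs h x ob = 1)
    (π : GPolicy St Ob Ac) (hπ : IsPolicy H π) :
    ∑ t : Traj H St Ob Ac, trajProb H μ T Obs π t = 1 := by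
  rw [Fintype.sum_prod_type]
  simp only [Fintype.sum_prod_type]
  exact sum_trajProbN_one H hH μ T Obs hμs hTs hOs π hπ

end Norm
section Core

open Finset

lemma core_bound {St Ob Ac : Type*} [Fintype St] [Fintype Ob] [Fintype Ac]
    [Inhabited St] [Inhabited Ob] [Inhabited Ac]
    (H : ℕ) (μ : St → ℝ) (T : ℕ → St → Ac → St → ℝ) (Obs : ℕ → St → Ob → ℝ)
    (r : ℕ → St → Ac → ℝ) (hr0 : ∀ h x u, 0 ≤ r h x u) (hr1 : ∀ h x u, r h x u ≤ 1)
    (P P' Rf : GPolicy St Ob Ac)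
    (hPsum : ∑ t : Traj H St Ob Ac, trajProb H μ T Obs P t = 1)
    (hRfsum : ∑ t : Traj H St Ob Ac, trajProb H μ T Obs Rf t = 1)
    (hRf0 : ∀ t, 0 ≤ trajProb H μ T Obs Rf t)
    {ι : Type*} (K : Finset ι) (q : ι → Traj H St Ob Ac → ℝ)
    (hq0 : ∀ k t, 0 ≤ q k t) (hq1 : ∀ k t, q k t ≤ 1)
    (hQP : ∀ t, trajProb H μ T Obs Rf t * ∏ k ∈ K, q k t ≤ trajProb H μ T Obs P t)
    (hQP' : ∀ t, trajProb H μ T Obs Rf t * ∏ k ∈ K, q k t ≤ trajProb H μ T Obs P' t) :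
    pvalue H μ T Obs r P - pvalue H μ T Obs r P'
      ≤ H * ∑ k ∈ K, ∑ t : Traj H St Ob Ac, trajProb H μ T Obs Rf t * (1 - q k t) := by
  classical
  set R : Traj H St Ob Ac → ℝ :=
    fun t => ∑ h ∈ Finset.range H, r h (extN t.1 h) (extN t.2.2 h) with hR
  have hR0 : ∀ t, 0 ≤ R t := fun t => Finset.sum_nonneg fun h _ => hr0 _ _ _
  have hRH : ∀ t, R t ≤ H := by
    intro t
    calc R t ≤ ∑ h ∈ Finset.range H, 1 := Finset.sum_le_sum fun h _ => hr1 _ _ _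
    _ = H := by simp
  set Q : Traj H St Ob Ac → ℝ := fun t => trajProb H μ T Obs Rf t * ∏ k ∈ K, q k t with hQ
  have hQ0 : ∀ t, 0 ≤ Q t := fun t =>
    mul_nonneg (hRf0 t) (Finset.prod_nonneg fun k _ => hq0 k t)
  have hpv : ∀ π : GPolicy St Ob Ac, pvalue H μ T Obs r π
      = ∑ t : Traj H St Ob Ac, trajProb H μ T Obs π t * R t := fun π => rfl
  have key1 : pvalue H μ T Obs r P - ∑ t, Q t * R t ≤ H * (1 - ∑ t, Q t) := by
    rw [hpv]
    have h1 : (∑ t : Traj H St Ob Ac, trajProb H μ T Obs P t * R t) - ∑ t, Q t * R t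
        = ∑ t : Traj H St Ob Ac, (trajProb H μ T Obs P t - Q t) * R t := by
      rw [← Finset.sum_sub_distrib]
      exact Finset.sum_congr rfl fun t _ => by ring
    rw [h1]
    have h2 : ∑ t : Traj H St Ob Ac, (trajProb H μ T Obs P t - Q t) * R t
        ≤ ∑ t : Traj H St Ob Ac, (trajProb H μ T Obs P t - Q t) * H := by
      refine Finset.sum_le_sum fun t _ => ?_
      have hQle : Q t ≤ trajProb H μ T Obs P t := hQP t
      exact mul_le_mul_of_nonneg_left (hRH t) (by linarith)
    refine h2.trans ?_
    rw [← Finset.sum_mul, Finset.sum_sub_distrib, hPsum]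
    ring_nf
    exact le_of_eq (by ring)
  have key2 : ∑ t, Q t * R t ≤ pvalue H μ T Obs r P' := by
    rw [hpv]
    exact Finset.sum_le_sum fun t _ => mul_le_mul_of_nonneg_right (hQP' t) (hR0 t)
  have key3 : 1 - ∑ t, Q t ≤ ∑ k ∈ K, ∑ t : Traj H St Ob Ac,
      trajProb H μ T Obs Rf t * (1 - q k t) := by
    calc 1 - ∑ t, Q t
        = ∑ t : Traj H St Ob Ac, (trajProb H μ T Obs Rf t - Q t) := by
          rw [Finset.sum_sub_distrib, hRfsum]
      _ = ∑ t : Traj H St Ob Ac, trajProb H μ T Obs Rf t * (1 - ∏ k ∈ K, q k t) :=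
          Finset.sum_congr rfl fun t _ => by rw [hQ]; ring
      _ ≤ ∑ t : Traj H St Ob Ac, ∑ k ∈ K, trajProb H μ T Obs Rf t * (1 - q k t) := by
          refine Finset.sum_le_sum fun t _ => ?_
          rw [← Finset.mul_sum]
          exact mul_le_mul_of_nonneg_left
            (one_sub_prod_le K (fun k => q k t) (fun k _ => hq0 k t) (fun k _ => hq1 k t))
            (hRf0 t)
      _ = ∑ k ∈ K, ∑ t : Traj H St Ob Ac, trajProb H μ T Obs Rf t * (1 - q k t) :=
          Finset.sum_comm
  have hHnn : (0:ℝ) ≤ H := Nat.cast_nonneg H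
  nlinarith [key1, key2, key3, hHnn]
end Core
section PiHelpers

open Finset

lemma update_prod_erase {n : ℕ} {AcI : Fin n → Type*} (i : Fin n)
    (f : ∀ j, AcI j → ℝ) (uD : AcI i → ℝ) (b : ∀ j, AcI j) :
    uD (b i) * ∏ j ∈ Finset.univ.erase i, f j (b j)
      = ∏ j, Function.update f i uD j (b j) := by
  classical
  rw [← Finset.mul_prod_erase Finset.univ (fun j => Function.update f i uD j (b j))
    (Finset.mem_univ i)]
  congr 1
  · rw [Function.update_self]
  · exact Finset.prod_congr rfl fun j hj => by
      rw [Function.update_of_ne (Finset.ne_of_mem_erase hj)]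

lemma sum_update_prod {n : ℕ} {AcI : Fin n → Type*} [∀ j, Fintype (AcI j)] (i : Fin n)
    (f : ∀ j, AcI j → ℝ) (uD : AcI i → ℝ)
    (hf : ∀ j, ∑ bj, f j bj = 1) (huD : ∑ b, uD b = 1) :
    (∑ b : ∀ j, AcI j, uD (b i) * ∏ j ∈ Finset.univ.erase i, f j (b j)) = 1 := by
  classical
  rw [Finset.sum_congr rfl fun b _ => update_prod_erase i f uD b, ← Fintype.prod_sum]
  refine Finset.prod_eq_one fun j _ => ?_
  rcases eq_or_ne j i with rfl | hne
  · rw [Function.update_self]; exact huD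
  · rw [Function.update_of_ne hne]; exact hf j

lemma sum_prod_pi {n : ℕ} {AcI : Fin n → Type*} [∀ j, Fintype (AcI j)]
    (f : ∀ j, AcI j → ℝ) (hf : ∀ j, ∑ bj, f j bj = 1) :
    (∑ b : ∀ j, AcI j, ∏ j, f j (b j)) = 1 := by
  classical
  rw [← Fintype.prod_sum]
  exact Finset.prod_eq_one fun j _ => hf j

end PiHelpers

/-- Equilibrium distillation bound for the NE/CCE gap: in a POSG
satisfying the deterministic filter condition, given a joint Markov state-based
policy `π` and (possibly stochastic) decoding functions `gD`, if `G` upper-bounds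
the NE/CCE gap of `π` (over information-based unilateral deviations) and `E`
upper-bounds the per-step decoding error probability of every agent's decoder
under every unilateral deviation from `π`, then the NE/CCE gap of the distilled
policy `π^gD` is at most `G + 2 n H² E`. -/
theorem stmt_14 {St Ob C : Type*} {n : ℕ} {AcI : Fin n → Type*} {PI : Fin n → Type*}
    [Fintype St] [Fintype Ob] [∀ i, Fintype (AcI i)]
    [Inhabited St] [Inhabited Ob] [∀ i, Inhabited (AcI i)]
    (H : ℕ) (hH : 0 < H)
    (μ : St → ℝ) (T : ℕ → St → (∀ i, AcI i) → St → ℝ) (Obs : ℕ → St → Ob → ℝ)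
    (hμ0 : ∀ x, 0 ≤ μ x) (hμs : ∑ x, μ x = 1)
    (hT0 : ∀ h x u y, 0 ≤ T h x u y) (hTs : ∀ h x u, ∑ y, T h x u y = 1)
    (hO0 : ∀ h x o, 0 ≤ Obs h x o) (hOs : ∀ h x, ∑ o, Obs h x o = 1)
    (fC : ℕ → (ℕ → Ob) → (ℕ → ∀ i, AcI i) → C)
    (fP : ∀ i : Fin n, ℕ → (ℕ → Ob) → (ℕ → ∀ i, AcI i) → PI i)
    (hfC : ∀ h (o o' : ℕ → Ob) (a a' : ℕ → ∀ i, AcI i),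
      (∀ k, k ≤ h → o k = o' k) → (∀ k, k < h → a k = a' k) → fC h o a = fC h o' a')
    (hfP : ∀ i h (o o' : ℕ → Ob) (a a' : ℕ → ∀ i, AcI i),
      (∀ k, k ≤ h → o k = o' k) → (∀ k, k < h → a k = a' k) → fP i h o a = fP i h o' a')
    (r : Fin n → ℕ → St → (∀ i, AcI i) → ℝ)
    (hr0 : ∀ i h x u, 0 ≤ r i h x u) (hr1 : ∀ i h x u, r i h x u ≤ 1)
    (π : ∀ i : Fin n, ℕ → St → AcI i → ℝ)
    (hπ0 : ∀ i h x b, 0 ≤ π i h x b) (hπs : ∀ i h x, ∑ b, π i h x b = 1)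
    -- deterministic filter condition
    (trueφ : ∀ i : Fin n, ℕ → C → PI i → St)
    (hdf : ∀ (s : ℕ → St) (o : ℕ → Ob) (a : ℕ → ∀ i, AcI i),
      modelProbN H μ T Obs s o a ≠ 0 →
        ∀ i : Fin n, ∀ h, h < H → s h = trueφ i h (fC h o a) (fP i h o a))
    -- possibly stochastic decoding functions
    (gD : ∀ i : Fin n, ℕ → C → PI i → St → ℝ)
    (hgD0 : ∀ i h c p x, 0 ≤ gD i h c p x) (hgDs : ∀ i h c p, ∑ x, gD i h c p x = 1)
    (E G : ℝ)
    -- `E` bounds the decoding error probability of every decoder `gD j` at every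
    -- step under every unilateral information-based deviation `u_i × π_{-i}`
    (hE : ∀ i : Fin n, ∀ u : ℕ → C → PI i → AcI i → ℝ,
      (∀ h c p, (∀ b, 0 ≤ u h c p b) ∧ ∑ b, u h c p b = 1) →
      ∀ j : Fin n, ∀ h, h < H →
        (∑ t : Traj H St Ob (∀ i, AcI i),
          trajProb H μ T Obs
            (fun h' s o a b => u h' (fC h' o a) (fP i h' o a) (b i) *
              ∏ j' ∈ Finset.univ.erase i, π j' h' (s h') (b j')) t *
          (1 - gD j h (fC h (extN t.2.1) (extN t.2.2)) (fP j h (extN t.2.1) (extN t.2.2))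
                (extN t.1 h))) ≤ E)
    -- `G` bounds the NE/CCE gap of `π`
    (hG : ∀ i : Fin n, ∀ u : ℕ → C → PI i → AcI i → ℝ,
      (∀ h c p, (∀ b, 0 ≤ u h c p b) ∧ ∑ b, u h c p b = 1) →
      pvalue H μ T Obs (r i)
          (fun h' s o a b => u h' (fC h' o a) (fP i h' o a) (b i) *
            ∏ j' ∈ Finset.univ.erase i, π j' h' (s h') (b j')) -
        pvalue H μ T Obs (r i) (fun h' s _o _a b => ∏ j, π j h' (s h') (b j)) ≤ G) :
    -- conclusion: the NE/CCE gap of the distilled policy `π^gD` is ≤ G + 2 n H² E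
    ∀ i : Fin n, ∀ u : ℕ → C → PI i → AcI i → ℝ,
      (∀ h c p, (∀ b, 0 ≤ u h c p b) ∧ ∑ b, u h c p b = 1) →
      pvalue H μ T Obs (r i)
          (fun h' _s o a b => u h' (fC h' o a) (fP i h' o a) (b i) *
            ∏ j' ∈ Finset.univ.erase i,
              ∑ x, gD j' h' (fC h' o a) (fP j' h' o a) x * π j' h' x (b j')) -
        pvalue H μ T Obs (r i)
          (fun h' _s o a b => ∏ j, ∑ x, gD j h' (fC h' o a) (fP j h' o a) x * π j h' x (b j)) ≤
      G + 2 * n * H ^ 2 * E := by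
  classical
  intro i u hu
  set PA : GPolicy St Ob (∀ j, AcI j) := fun h' _s o a b =>
    u h' (fC h' o a) (fP i h' o a) (b i) *
      ∏ j' ∈ Finset.univ.erase i,
        ∑ x, gD j' h' (fC h' o a) (fP j' h' o a) x * π j' h' x (b j') with hPA
  set PB : GPolicy St Ob (∀ j, AcI j) := fun h' _s o a b =>
    ∏ j, ∑ x, gD j h' (fC h' o a) (fP j h' o a) x * π j h' x (b j) with hPB
  set PA' : GPolicy St Ob (∀ j, AcI j) := fun h' s o a b =>
    u h' (fC h' o a) (fP i h' o a) (b i) *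
      ∏ j' ∈ Finset.univ.erase i, π j' h' (s h') (b j') with hPA'
  set PB' : GPolicy St Ob (∀ j, AcI j) := fun h' s _o _a b =>
    ∏ j, π j h' (s h') (b j) with hPB'
  -- basic facts about the mixture factors
  have hmix0 : ∀ (j : Fin n) (h' : ℕ) c p (b : AcI j),
      0 ≤ ∑ x, gD j h' c p x * π j h' x b :=
    fun j h' c p b => Finset.sum_nonneg fun x _ =>
      mul_nonneg (hgD0 _ _ _ _ _) (hπ0 _ _ _ _)
  have hmixs : ∀ (j : Fin n) (h' : ℕ) c p,
      (∑ b : AcI j, ∑ x, gD j h' c p x * π j h' x b) = 1 := by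
    intro j h' c p
    rw [Finset.sum_comm]
    simp only [← Finset.mul_sum, hπs, mul_one]
    exact hgDs j h' c p
  have hgD1 : ∀ j h' c p x, gD j h' c p x ≤ 1 := by
    intro j h' c p x
    rw [← hgDs j h' c p]
    exact Finset.single_le_sum (fun y _ => hgD0 j h' c p y) (Finset.mem_univ x)
  -- validity of the four policies
  have hPAiso : IsPolicy H PA := by
    constructor
    · intro h hh s s' o o' a a' hs ho ha
      have e1 : fC h o a = fC h o' a' := hfC h o o' a a' ho ha
      have e2 : ∀ j, fP j h o a = fP j h o' a' := fun j => hfP j h o o' a a' ho ha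
      simp only [hPA, e1, e2]
    · intro h s o a
      refine ⟨fun b => mul_nonneg ((hu h _ _).1 _)
        (Finset.prod_nonneg fun j _ => hmix0 _ _ _ _ _), ?_⟩
      simp only [hPA]
      exact sum_update_prod i
        (fun j bj => ∑ x, gD j h (fC h o a) (fP j h o a) x * π j h x bj)
        (fun bi => u h (fC h o a) (fP i h o a) bi)
        (fun j => hmixs j h _ _) (hu h _ _).2
  have hPBiso : IsPolicy H PB := by
    constructor
    · intro h hh s s' o o' a a' hs ho ha
      have e1 : fC h o a = fC h o' a' := hfC h o o' a a' ho ha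
      have e2 : ∀ j, fP j h o a = fP j h o' a' := fun j => hfP j h o o' a a' ho ha
      simp only [hPB, e1, e2]
    · intro h s o a
      refine ⟨fun b => Finset.prod_nonneg fun j _ => hmix0 _ _ _ _ _, ?_⟩
      simp only [hPB]
      exact sum_prod_pi
        (fun j bj => ∑ x, gD j h (fC h o a) (fP j h o a) x * π j h x bj)
        (fun j => hmixs j h _ _)
  have hPA'iso : IsPolicy H PA' := by
    constructor
    · intro h hh s s' o o' a a' hs ho ha
      have e1 : fC h o a = fC h o' a' := hfC h o o' a a' ho ha
      have e2 : ∀ j, fP j h o a = fP j h o' a' := fun j => hfP j h o o' a a' ho ha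
      simp only [hPA', e1, e2, hs h le_rfl]
    · intro h s o a
      refine ⟨fun b => mul_nonneg ((hu h _ _).1 _)
        (Finset.prod_nonneg fun j _ => hπ0 _ _ _ _), ?_⟩
      simp only [hPA']
      exact sum_update_prod i (fun j bj => π j h (s h) bj)
        (fun bi => u h (fC h o a) (fP i h o a) bi)
        (fun j => hπs j h (s h)) (hu h _ _).2
  have hPB'iso : IsPolicy H PB' := by
    constructor
    · intro h hh s s' o o' a a' hs ho ha
      simp only [hPB', hs h le_rfl]
    · intro h s o a
      refine ⟨fun b => Finset.prod_nonneg fun j _ => hπ0 _ _ _ _, ?_⟩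
      simp only [hPB']
      exact sum_prod_pi (fun j bj => π j h (s h) bj) (fun j => hπs j h (s h))
  -- normalization and nonnegativity
  have hPAsum := sum_trajProb_one H hH μ T Obs hμs hTs hOs PA hPAiso
  have hPA'sum := sum_trajProb_one H hH μ T Obs hμs hTs hOs PA' hPA'iso
  have hPB'sum := sum_trajProb_one H hH μ T Obs hμs hTs hOs PB' hPB'iso
  have hPA'0 : ∀ t : Traj H St Ob (∀ j, AcI j), 0 ≤ trajProb H μ T Obs PA' t := fun t =>
    trajProbN_nonneg H μ T Obs PA' hμ0 hT0 hO0
      (fun h s o a b => (hPA'iso.2 h s o a).1 b) _ _ _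
  have hPB'0 : ∀ t : Traj H St Ob (∀ j, AcI j), 0 ≤ trajProb H μ T Obs PB' t := fun t =>
    trajProbN_nonneg H μ T Obs PB' hμ0 hT0 hO0
      (fun h s o a b => (hPB'iso.2 h s o a).1 b) _ _ _
  -- the per-step decoding success probabilities
  set q : ℕ × Fin n → Traj H St Ob (∀ j, AcI j) → ℝ := fun k t =>
    gD k.2 k.1 (fC k.1 (extN t.2.1) (extN t.2.2)) (fP k.2 k.1 (extN t.2.1) (extN t.2.2))
      (extN t.1 k.1) with hq
  have hq0 : ∀ k t, 0 ≤ q k t := fun k t => hgD0 _ _ _ _ _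
  have hq1 : ∀ k t, q k t ≤ 1 := fun k t => hgD1 _ _ _ _ _
  have hprodq1 : ∀ (K : Finset (ℕ × Fin n)) (t : Traj H St Ob (∀ j, AcI j)),
      ∏ k ∈ K, q k t ≤ 1 :=
    fun K t => Finset.prod_le_one (fun k _ => hq0 k t) (fun k _ => hq1 k t)
  -- pointwise comparison inequalities
  have hQPA : ∀ t : Traj H St Ob (∀ j, AcI j),
      trajProb H μ T Obs PA' t * ∏ k ∈ (Finset.range H) ×ˢ (Finset.univ.erase i), q k t
        ≤ trajProb H μ T Obs PA t := by
    intro t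
    show trajProbN H μ T Obs PA' (extN t.1) (extN t.2.1) (extN t.2.2) *
        (∏ k ∈ (Finset.range H) ×ˢ (Finset.univ.erase i), q k t)
      ≤ trajProbN H μ T Obs PA (extN t.1) (extN t.2.1) (extN t.2.2)
    rw [trajProbN_factor, trajProbN_factor, Finset.prod_product, mul_assoc,
      ← Finset.prod_mul_distrib]
    refine mul_le_mul_of_nonneg_left ?_ (modelProbN_nonneg H μ T Obs hμ0 hT0 hO0 _ _ _)
    refine Finset.prod_le_prod (fun h _ => mul_nonneg ((hPA'iso.2 h (extN t.1) (extN t.2.1) (extN t.2.2)).1 (extN t.2.2 h))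
      (Finset.prod_nonneg fun j _ => hq0 (h, j) t)) (fun h hh => ?_)
    simp only [hPA, hPA', hq]
    rw [mul_assoc, ← Finset.prod_mul_distrib]
    refine mul_le_mul_of_nonneg_left (Finset.prod_le_prod
      (fun j _ => mul_nonneg (hπ0 _ _ _ _) (hgD0 _ _ _ _ _)) (fun j _ => ?_))
      ((hu h _ _).1 _)
    rw [mul_comm]
    exact Finset.single_le_sum
      (f := fun x => gD j h (fC h (extN t.2.1) (extN t.2.2)) (fP j h (extN t.2.1) (extN t.2.2)) x
        * π j h x (extN t.2.2 h j))
      (fun x _ => mul_nonneg (hgD0 _ _ _ _ _) (hπ0 _ _ _ _)) (Finset.mem_univ (extN t.1 h))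
  have hQPB : ∀ t : Traj H St Ob (∀ j, AcI j),
      trajProb H μ T Obs PB' t * ∏ k ∈ (Finset.range H) ×ˢ (Finset.univ : Finset (Fin n)), q k t
        ≤ trajProb H μ T Obs PB t := by
    intro t
    show trajProbN H μ T Obs PB' (extN t.1) (extN t.2.1) (extN t.2.2) *
        (∏ k ∈ (Finset.range H) ×ˢ (Finset.univ : Finset (Fin n)), q k t)
      ≤ trajProbN H μ T Obs PB (extN t.1) (extN t.2.1) (extN t.2.2)
    rw [trajProbN_factor, trajProbN_factor, Finset.prod_product, mul_assoc,
      ← Finset.prod_mul_distrib]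
    refine mul_le_mul_of_nonneg_left ?_ (modelProbN_nonneg H μ T Obs hμ0 hT0 hO0 _ _ _)
    refine Finset.prod_le_prod (fun h _ => mul_nonneg ((hPB'iso.2 h (extN t.1) (extN t.2.1) (extN t.2.2)).1 (extN t.2.2 h))
      (Finset.prod_nonneg fun j _ => hq0 (h, j) t)) (fun h hh => ?_)
    simp only [hPB, hPB', hq]
    rw [← Finset.prod_mul_distrib]
    refine Finset.prod_le_prod
      (fun j _ => mul_nonneg (hπ0 _ _ _ _) (hgD0 _ _ _ _ _)) (fun j _ => ?_)
    rw [mul_comm]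
    exact Finset.single_le_sum
      (f := fun x => gD j h (fC h (extN t.2.1) (extN t.2.2)) (fP j h (extN t.2.1) (extN t.2.2)) x
        * π j h x (extN t.2.2 h j))
      (fun x _ => mul_nonneg (hgD0 _ _ _ _ _) (hπ0 _ _ _ _)) (Finset.mem_univ (extN t.1 h))
  -- error bounds from hE
  have hEA : ∀ k ∈ (Finset.range H) ×ˢ (Finset.univ.erase i),
      (∑ t : Traj H St Ob (∀ j, AcI j), trajProb H μ T Obs PA' t * (1 - q k t)) ≤ E := by
    rintro ⟨h, j⟩ hk
    rw [Finset.mem_product, Finset.mem_range] at hk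
    exact hE i u hu j h hk.1
  have hu0 : ∀ (h : ℕ) c p, (∀ b : AcI i, 0 ≤ π i h (trueφ i h c p) b) ∧
      (∑ b : AcI i, π i h (trueφ i h c p) b) = 1 :=
    fun h c p => ⟨fun b => hπ0 i h _ b, hπs i h _⟩
  have hB'U0 : ∀ t : Traj H St Ob (∀ j, AcI j),
      trajProb H μ T Obs PB' t = trajProb H μ T Obs
        (fun h' s o a b => π i h' (trueφ i h' (fC h' o a) (fP i h' o a)) (b i) *
          ∏ j' ∈ Finset.univ.erase i, π j' h' (s h') (b j')) t := by
    intro t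
    show trajProbN H μ T Obs PB' (extN t.1) (extN t.2.1) (extN t.2.2)
      = trajProbN H μ T Obs (fun h' s o a b =>
          π i h' (trueφ i h' (fC h' o a) (fP i h' o a)) (b i) *
            ∏ j' ∈ Finset.univ.erase i, π j' h' (s h') (b j'))
          (extN t.1) (extN t.2.1) (extN t.2.2)
    rw [trajProbN_factor, trajProbN_factor]
    by_cases hm : modelProbN H μ T Obs (extN t.1) (extN t.2.1) (extN t.2.2) = 0
    · rw [hm, zero_mul, zero_mul]
    · congr 1
      refine Finset.prod_congr rfl fun h hh => ?_
      rw [Finset.mem_range] at hh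
      have hst := hdf (extN t.1) (extN t.2.1) (extN t.2.2) hm i h hh
      simp only [hPB']
      rw [← hst]
      exact (Finset.mul_prod_erase Finset.univ
        (fun j => π j h (extN t.1 h) (extN t.2.2 h j)) (Finset.mem_univ i)).symm
  have hEB : ∀ k ∈ (Finset.range H) ×ˢ (Finset.univ : Finset (Fin n)),
      (∑ t : Traj H St Ob (∀ j, AcI j), trajProb H μ T Obs PB' t * (1 - q k t)) ≤ E := by
    rintro ⟨h, j⟩ hk
    rw [Finset.mem_product, Finset.mem_range] at hk
    have := hE i (fun h' c p b => π i h' (trueφ i h' c p) b) hu0 j h hk.1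
    refine le_trans (le_of_eq ?_) this
    exact Finset.sum_congr rfl fun t _ => by rw [hB'U0 t]
  have hE0 : 0 ≤ E := by
    refine le_trans ?_ (hE i u hu i 0 hH)
    exact Finset.sum_nonneg fun t _ => mul_nonneg (hPA'0 t)
      (sub_nonneg.2 (hgD1 _ _ _ _ _))
  -- cardinality bounds
  have hcardA : (((Finset.range H) ×ˢ (Finset.univ.erase i)).card : ℝ) * E ≤ (n * H : ℕ) * E := by
    refine mul_le_mul_of_nonneg_right (Nat.cast_le.2 ?_) hE0
    rw [Finset.card_product, Finset.card_range]
    calc H * (Finset.univ.erase i).card ≤ H * n :=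
      Nat.mul_le_mul_left H (le_trans (Finset.card_le_card (Finset.erase_subset i Finset.univ))
        (by simp))
    _ = n * H := Nat.mul_comm H n
  have hcardB : (((Finset.range H) ×ˢ (Finset.univ : Finset (Fin n))).card : ℝ) * E
      ≤ (n * H : ℕ) * E := by
    refine mul_le_mul_of_nonneg_right (Nat.cast_le.2 ?_) hE0
    rw [Finset.card_product, Finset.card_range]
    simp [Nat.mul_comm]
  -- the three main estimates
  have main1 : pvalue H μ T Obs (r i) PA - pvalue H μ T Obs (r i) PA'
      ≤ (H : ℝ) * ((n * H : ℕ) * E) := by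
    refine le_trans (core_bound H μ T Obs (r i) (hr0 i) (hr1 i) PA PA' PA' hPAsum hPA'sum hPA'0
      ((Finset.range H) ×ˢ (Finset.univ.erase i)) q hq0 hq1 hQPA
      (fun t => mul_le_of_le_one_right (hPA'0 t) (hprodq1 _ t))) ?_
    refine mul_le_mul_of_nonneg_left ?_ (Nat.cast_nonneg H)
    calc (∑ k ∈ (Finset.range H) ×ˢ (Finset.univ.erase i),
        ∑ t : Traj H St Ob (∀ j, AcI j), trajProb H μ T Obs PA' t * (1 - q k t))
        ≤ ∑ _k ∈ (Finset.range H) ×ˢ (Finset.univ.erase i), E := Finset.sum_le_sum hEA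
      _ = (((Finset.range H) ×ˢ (Finset.univ.erase i)).card : ℝ) * E := by
          rw [Finset.sum_const, nsmul_eq_mul]
      _ ≤ (n * H : ℕ) * E := hcardA
  have main2 : pvalue H μ T Obs (r i) PA' - pvalue H μ T Obs (r i) PB' ≤ G := hG i u hu
  have main3 : pvalue H μ T Obs (r i) PB' - pvalue H μ T Obs (r i) PB
      ≤ (H : ℝ) * ((n * H : ℕ) * E) := by
    refine le_trans (core_bound H μ T Obs (r i) (hr0 i) (hr1 i) PB' PB PB' hPB'sum hPB'sum hPB'0
      ((Finset.range H) ×ˢ (Finset.univ : Finset (Fin n))) q hq0 hq1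
      (fun t => mul_le_of_le_one_right (hPB'0 t) (hprodq1 _ t)) hQPB) ?_
    refine mul_le_mul_of_nonneg_left ?_ (Nat.cast_nonneg H)
    calc (∑ k ∈ (Finset.range H) ×ˢ (Finset.univ : Finset (Fin n)),
        ∑ t : Traj H St Ob (∀ j, AcI j), trajProb H μ T Obs PB' t * (1 - q k t))
        ≤ ∑ _k ∈ (Finset.range H) ×ˢ (Finset.univ : Finset (Fin n)), E := Finset.sum_le_sum hEB
      _ = (((Finset.range H) ×ˢ (Finset.univ : Finset (Fin n))).card : ℝ) * E := by
          rw [Finset.sum_const, nsmul_eq_mul]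
      _ ≤ (n * H : ℕ) * E := hcardB
  have harith : (G : ℝ) + 2 * n * H ^ 2 * E
      = G + ((H : ℝ) * ((n * H : ℕ) * E) + (H : ℝ) * ((n * H : ℕ) * E)) := by
    push_cast
    ring
  linarith
end

section
/- Fix a state-based joint policy $\pi \in \Pi_{\mathcal{S}}$ in a finite-horizon stochastic game with $n$ agents, state-action rewards, and Markov transitions. For any agent $i$, the maximum value of $v_i((m_i \diamond \pi_i) \odot \pi_{-i})$ over general strategy modifications $m_i$ (which may condition on the entire joint history including states) equals the maximum over Markov strategy modifications $m_i : \mathcal{S} \times \mathcal{A}_i \to \mathcal{A}_i$ conditioning only on the current state and recommended action: $\max_{m_i \in \mathcal{M}_i^{\mathrm{gen}}} v_i((m_i \diamond \pi_i) \odot \pi_{-i}) = \max_{m_i \in \mathcal{M}_{\mathcal{S},i}} v_i((m_i \diamond \pi_i) \odot \pi_{-i})$. -/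
set_option linter.unusedSectionVars false


open Finset

section POMDP

variable {St Ob Ac : Type*}

section PomdpAux

/-! ### auxiliary -/

def nprep {α : Type*} (v : α) (f : ℕ → α) : ℕ → α := fun k =>
  match k with
  | 0 => v
  | k + 1 => f k

@[simp] lemma nprep_zero {α : Type*} (v : α) (f : ℕ → α) : nprep v f 0 = v := rfl
@[simp] lemma nprep_succ {α : Type*} (v : α) (f : ℕ → α) (k : ℕ) : nprep v f (k+1) = f k := rfl

def sh1 {α : Type*} (f : ℕ → α) : ℕ → α := fun k => f (k + 1)

@[simp] lemma sh1_apply {α : Type*} (f : ℕ → α) (k : ℕ) : sh1 f k = f (k+1) := rfl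

lemma extN_cons {α : Type*} [Inhabited α] {H : ℕ} (x : α) (f : Fin H → α) :
    extN (Fin.cons x f) = nprep x (extN f) := by
  funext k
  cases k with
  | zero => simp [extN]
  | succ k =>
    simp only [extN, nprep_succ]
    by_cases hk : k < H
    · rw [dif_pos (Nat.succ_lt_succ hk), dif_pos hk]
      have h : (⟨k+1, Nat.succ_lt_succ hk⟩ : Fin (H+1)) = Fin.succ ⟨k, hk⟩ := rfl
      rw [h, Fin.cons_succ]
    · rw [dif_neg (by omega), dif_neg hk]

/-- conditioning a general policy on the first transition -/
def condPol (πg : GPolicy St Ob Ac) (x : St) (o0 : Ob) (a0 : Ac) : GPolicy St Ob Ac :=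
  fun k s o a => πg (k+1) (nprep x s) (nprep o0 o) (nprep a0 a)

lemma trajProbN_succ (H : ℕ) (μ : St → ℝ) (T : ℕ → St → Ac → St → ℝ)
    (Obs : ℕ → St → Ob → ℝ) (πg : GPolicy St Ob Ac)
    (x : St) (s : ℕ → St) (o0 : Ob) (o : ℕ → Ob) (a0 : Ac) (a : ℕ → Ac) :
    trajProbN (H+1) μ T Obs πg (nprep x s) (nprep o0 o) (nprep a0 a)
      = μ x * (Obs 0 x o0 * πg 0 (nprep x s) (nprep o0 o) (nprep a0 a) a0 *
          trajProbN H (fun y => if 0 < H then T 0 x a0 y else 1)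
            (sh1 T) (sh1 Obs) (condPol πg x o0 a0) s o a) := by
  unfold trajProbN
  rw [Finset.prod_range_succ']
  simp only [nprep_zero, nprep_succ, sh1_apply, condPol]
  have h1 : (if 1 < H + 1 then T 0 x a0 (s 0) else 1)
      = (if 0 < H then T 0 x a0 (s 0) else 1) := by
    by_cases h : 0 < H <;> simp [h, Nat.succ_lt_succ_iff]
  have h2 : ∀ k, (if k + 1 + 1 < H + 1 then T (k+1) (s k) (a k) (s (k+1)) else 1)
      = (if k + 1 < H then T (k+1) (s k) (a k) (s (k+1)) else 1) := by
    intro k; by_cases h : k + 1 < H <;> simp [h, Nat.succ_lt_succ_iff]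
  rw [Finset.prod_congr rfl (fun k _ => by rw [h2 k])]
  ring_nf
  rw [add_comm 1 H, h1]

lemma sum_traj_succ [Fintype St] [Fintype Ob] [Fintype Ac] (H : ℕ)
    (G : Traj (H+1) St Ob Ac → ℝ) :
    ∑ t : Traj (H+1) St Ob Ac, G t
      = ∑ x : St, ∑ o0 : Ob, ∑ a0 : Ac, ∑ t' : Traj H St Ob Ac,
          G (Fin.cons x t'.1, Fin.cons o0 t'.2.1, Fin.cons a0 t'.2.2) := by
  let e : (St × Ob × Ac) × Traj H St Ob Ac ≃ Traj (H+1) St Ob Ac :=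
    { toFun := fun p => (Fin.cons p.1.1 p.2.1, Fin.cons p.1.2.1 p.2.2.1, Fin.cons p.1.2.2 p.2.2.2)
      invFun := fun t => ((t.1 0, t.2.1 0, t.2.2 0), (Fin.tail t.1, Fin.tail t.2.1, Fin.tail t.2.2))
      left_inv := by
        rintro ⟨⟨x, o0, a0⟩, ⟨s, o, a⟩⟩
        simp [Fin.tail_cons]
      right_inv := by
        rintro ⟨s, o, a⟩
        simp [Fin.cons_self_tail] }
  rw [← Equiv.sum_comp e G, Fintype.sum_prod_type]
  simp only [Fintype.sum_prod_type]
  rfl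


lemma condPol_causal {H : ℕ} {πg : GPolicy St Ob Ac} (hc : CausalPolicy (H+1) πg)
    (x : St) (o0 : Ob) (a0 : Ac) : CausalPolicy H (condPol πg x o0 a0) := by
  intro k hk s s' o o' a a' hs ho ha
  apply hc (k+1) (by omega)
  · intro t ht; cases t with
    | zero => rfl
    | succ t => exact hs t (by omega)
  · intro t ht; cases t with
    | zero => rfl
    | succ t => exact ho t (by omega)
  · intro t ht; cases t with
    | zero => rfl
    | succ t => exact ha t (by omega)

variable [Fintype St] [Fintype Ob] [Fintype Ac] [Inhabited St] [Inhabited Ob] [Inhabited Ac]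

lemma pvalue_zero (μ : St → ℝ) (T : ℕ → St → Ac → St → ℝ) (Obs : ℕ → St → Ob → ℝ)
    (rr : ℕ → St → Ac → ℝ) (πg : GPolicy St Ob Ac) : pvalue 0 μ T Obs rr πg = 0 := by
  simp [pvalue]

lemma trajProb_cons (H : ℕ) (μ : St → ℝ) (T : ℕ → St → Ac → St → ℝ)
    (Obs : ℕ → St → Ob → ℝ) (πg : GPolicy St Ob Ac) (hc : CausalPolicy (H+1) πg)
    (x : St) (o0 : Ob) (a0 : Ac) (t' : Traj H St Ob Ac) :
    trajProb (H+1) μ T Obs πg (Fin.cons x t'.1, Fin.cons o0 t'.2.1, Fin.cons a0 t'.2.2)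
      = μ x * (Obs 0 x o0 * πg 0 (fun _ => x) (fun _ => o0) (fun _ => a0) a0 *
          trajProb H (fun y => if 0 < H then T 0 x a0 y else 1)
            (sh1 T) (sh1 Obs) (condPol πg x o0 a0) t') := by
  unfold trajProb
  simp only [extN_cons]
  rw [trajProbN_succ]
  have hrw : πg 0 (nprep x (extN t'.1)) (nprep o0 (extN t'.2.1)) (nprep a0 (extN t'.2.2))
      = πg 0 (fun _ => x) (fun _ => o0) (fun _ => a0) := by
    apply hc 0 (by omega)
    · intro k hk; have : k = 0 := by omega
      subst this; rfl
    · intro k hk; have : k = 0 := by omega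
      subst this; rfl
    · intro k hk; omega
  rw [hrw]

/-- the canonical step-0 probability of action `a0` -/
noncomputable def pol0 (πg : GPolicy St Ob Ac) (x : St) (o0 : Ob) (a0 : Ac) : ℝ :=
  πg 0 (fun _ => x) (fun _ => o0) (fun _ => a0) a0

lemma sum_pol0 {H : ℕ} (πg : GPolicy St Ob Ac) (hc : CausalPolicy (H+1) πg)
    (hπs : ∀ h s o a, ∑ b, πg h s o a b = 1) (x : St) (o0 : Ob) :
    ∑ a0 : Ac, pol0 πg x o0 a0 = 1 := by
  have hrw : ∀ a0 : Ac, pol0 πg x o0 a0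
      = πg 0 (fun _ => x) (fun _ => o0) (fun _ => default) a0 := by
    intro a0
    refine congrFun (hc 0 (by omega) _ _ _ _ _ _ ?_ ?_ ?_) a0
    · intro k hk; rfl
    · intro k hk; rfl
    · intro k hk; omega
  rw [Finset.sum_congr rfl fun a0 _ => hrw a0]
  exact hπs 0 _ _ _

lemma mass_traj_zero (μ' : St → ℝ) (hμ' : ∀ y, μ' y = 1) (T : ℕ → St → Ac → St → ℝ)
    (Obs : ℕ → St → Ob → ℝ) (πg : GPolicy St Ob Ac) :
    ∑ t : Traj 0 St Ob Ac, trajProb 0 μ' T Obs πg t = 1 := by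
  have h1 : ∀ t : Traj 0 St Ob Ac, trajProb 0 μ' T Obs πg t = 1 := by
    intro t; simp [trajProb, trajProbN, hμ']
  rw [Finset.sum_congr rfl fun t _ => h1 t, Finset.sum_const, nsmul_eq_mul, mul_one]
  norm_num [Finset.card_univ]

lemma massone : ∀ (H : ℕ) (μ : St → ℝ) (T : ℕ → St → Ac → St → ℝ)
    (Obs : ℕ → St → Ob → ℝ) (πg : GPolicy St Ob Ac), 0 < H →
    CausalPolicy H πg → (∀ h s o a, ∑ b, πg h s o a b = 1) →
    (∑ x, μ x) = 1 → (∀ h x u, ∑ y, T h x u y = 1) → (∀ h x, ∑ o', Obs h x o' = 1) →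
    ∑ t : Traj H St Ob Ac, trajProb H μ T Obs πg t = 1 := by
  intro H
  induction H with
  | zero => omega
  | succ H ih =>
    intro μ T Obs πg _ hc hπs hμs hTs hOs
    rw [sum_traj_succ]
    have hmass : ∀ x o0 a0, ∑ t' : Traj H St Ob Ac,
        trajProb H (fun y => if 0 < H then T 0 x a0 y else 1)
          (sh1 T) (sh1 Obs) (condPol πg x o0 a0) t' = 1 := by
      intro x o0 a0
      rcases Nat.eq_zero_or_pos H with hH | hH
      · subst hH
        exact mass_traj_zero _ (fun y => by norm_num) _ _ _
      · have hμ' : (fun y => if 0 < H then T 0 x a0 y else 1) = T 0 x a0 := by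
          funext y; rw [if_pos hH]
        rw [hμ']
        exact ih (T 0 x a0) (sh1 T) (sh1 Obs) (condPol πg x o0 a0) hH
          (condPol_causal hc x o0 a0) (fun h s o a => hπs (h+1) _ _ _)
          (hTs 0 x a0) (fun h u v => hTs (h+1) u v) (fun h u => hOs (h+1) u)
    calc ∑ x : St, ∑ o0 : Ob, ∑ a0 : Ac, ∑ t' : Traj H St Ob Ac,
          trajProb (H+1) μ T Obs πg
            (Fin.cons x t'.1, Fin.cons o0 t'.2.1, Fin.cons a0 t'.2.2)
        = ∑ x : St, ∑ o0 : Ob, ∑ a0 : Ac, μ x * (Obs 0 x o0 * pol0 πg x o0 a0) := by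
          refine Finset.sum_congr rfl fun x _ => Finset.sum_congr rfl fun o0 _ =>
            Finset.sum_congr rfl fun a0 _ => ?_
          rw [Finset.sum_congr rfl fun t' _ => trajProb_cons H μ T Obs πg hc x o0 a0 t']
          rw [Finset.sum_congr rfl fun t' (_ : t' ∈ Finset.univ) =>
            (by simp only [pol0]; ring : μ x * (Obs 0 x o0 * πg 0 (fun _ => x) (fun _ => o0) (fun _ => a0) a0 *
                trajProb H (fun y => if 0 < H then T 0 x a0 y else 1)
                  (sh1 T) (sh1 Obs) (condPol πg x o0 a0) t')
              = (μ x * (Obs 0 x o0 * pol0 πg x o0 a0)) *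
                trajProb H (fun y => if 0 < H then T 0 x a0 y else 1)
                  (sh1 T) (sh1 Obs) (condPol πg x o0 a0) t')]
          rw [← Finset.mul_sum, hmass x o0 a0, mul_one]
      _ = 1 := by
          have h2 : ∀ x : St, ∑ o0 : Ob, ∑ a0 : Ac, μ x * (Obs 0 x o0 * pol0 πg x o0 a0)
              = μ x := by
            intro x
            have h1 : ∀ o0 : Ob, ∑ a0 : Ac, μ x * (Obs 0 x o0 * pol0 πg x o0 a0)
                = μ x * Obs 0 x o0 := by
              intro o0
              rw [Finset.sum_congr rfl fun a0 (_ : a0 ∈ Finset.univ) =>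
                (by ring : μ x * (Obs 0 x o0 * pol0 πg x o0 a0)
                  = (μ x * Obs 0 x o0) * pol0 πg x o0 a0)]
              rw [← Finset.mul_sum, sum_pol0 πg hc hπs, mul_one]
            rw [Finset.sum_congr rfl fun o0 _ => h1 o0, ← Finset.mul_sum, hOs 0 x, mul_one]
          rw [Finset.sum_congr rfl fun x _ => h2 x]
          exact hμs

lemma mass_tail (H : ℕ) (T : ℕ → St → Ac → St → ℝ) (Obs : ℕ → St → Ob → ℝ)
    (πg : GPolicy St Ob Ac) (hc : CausalPolicy (H+1) πg)
    (hπs : ∀ h s o a, ∑ b, πg h s o a b = 1)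
    (hTs : ∀ h x u, ∑ y, T h x u y = 1) (hOs : ∀ h x, ∑ o', Obs h x o' = 1)
    (x : St) (o0 : Ob) (a0 : Ac) :
    ∑ t' : Traj H St Ob Ac,
      trajProb H (fun y => if 0 < H then T 0 x a0 y else 1)
        (sh1 T) (sh1 Obs) (condPol πg x o0 a0) t' = 1 := by
  rcases Nat.eq_zero_or_pos H with hH | hH
  · subst hH
    exact mass_traj_zero _ (fun y => by norm_num) _ _ _
  · have hμ' : (fun y => if 0 < H then T 0 x a0 y else 1) = T 0 x a0 := by
      funext y; rw [if_pos hH]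
    rw [hμ']
    exact massone H (T 0 x a0) (sh1 T) (sh1 Obs) (condPol πg x o0 a0) hH
      (condPol_causal hc x o0 a0) (fun h s o a => hπs (h+1) _ _ _)
      (hTs 0 x a0) (fun h u v => hTs (h+1) u v) (fun h u => hOs (h+1) u)

lemma pvalue_succ (H : ℕ) (μ : St → ℝ) (T : ℕ → St → Ac → St → ℝ)
    (Obs : ℕ → St → Ob → ℝ) (rr : ℕ → St → Ac → ℝ) (πg : GPolicy St Ob Ac)
    (hc : CausalPolicy (H+1) πg) (hπs : ∀ h s o a, ∑ b, πg h s o a b = 1)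
    (hTs : ∀ h x u, ∑ y, T h x u y = 1) (hOs : ∀ h x, ∑ o', Obs h x o' = 1) :
    pvalue (H+1) μ T Obs rr πg
      = ∑ x : St, μ x * ∑ o0 : Ob, Obs 0 x o0 * ∑ a0 : Ac, pol0 πg x o0 a0 *
          (rr 0 x a0 + pvalue H (T 0 x a0) (sh1 T) (sh1 Obs) (sh1 rr)
            (condPol πg x o0 a0)) := by
  have key : ∀ (x : St) (o0 : Ob) (a0 : Ac), ∑ t' : Traj H St Ob Ac,
      trajProb (H+1) μ T Obs πg (Fin.cons x t'.1, Fin.cons o0 t'.2.1, Fin.cons a0 t'.2.2) *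
        ∑ h ∈ Finset.range (H+1),
          rr h (extN (Fin.cons x t'.1) h) (extN (Fin.cons a0 t'.2.2) h)
      = μ x * (Obs 0 x o0 * (pol0 πg x o0 a0 *
          (rr 0 x a0 + pvalue H (T 0 x a0) (sh1 T) (sh1 Obs) (sh1 rr)
            (condPol πg x o0 a0)))) := by
    intro x o0 a0
    have hR : ∀ t' : Traj H St Ob Ac,
        ∑ h ∈ Finset.range (H+1),
          rr h (extN (Fin.cons x t'.1) h) (extN (Fin.cons a0 t'.2.2) h)
        = rr 0 x a0 + ∑ h ∈ Finset.range H, sh1 rr h (extN t'.1 h) (extN t'.2.2 h) := by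
      intro t'
      rw [extN_cons, extN_cons, Finset.sum_range_succ']
      simp only [nprep_zero, nprep_succ, sh1_apply]
      ring
    rw [Finset.sum_congr rfl fun t' (_ : t' ∈ Finset.univ) => by
      rw [trajProb_cons H μ T Obs πg hc x o0 a0 t', hR t']]
    rw [Finset.sum_congr rfl fun t' (_ : t' ∈ Finset.univ) =>
      (by simp only [pol0]; ring :
        μ x * (Obs 0 x o0 * πg 0 (fun _ => x) (fun _ => o0) (fun _ => a0) a0 *
            trajProb H (fun y => if 0 < H then T 0 x a0 y else 1)
              (sh1 T) (sh1 Obs) (condPol πg x o0 a0) t') *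
          (rr 0 x a0 + ∑ h ∈ Finset.range H, sh1 rr h (extN t'.1 h) (extN t'.2.2 h))
        = (μ x * (Obs 0 x o0 * pol0 πg x o0 a0)) *
            (trajProb H (fun y => if 0 < H then T 0 x a0 y else 1)
                (sh1 T) (sh1 Obs) (condPol πg x o0 a0) t' * rr 0 x a0 +
              trajProb H (fun y => if 0 < H then T 0 x a0 y else 1)
                (sh1 T) (sh1 Obs) (condPol πg x o0 a0) t' *
                ∑ h ∈ Finset.range H, sh1 rr h (extN t'.1 h) (extN t'.2.2 h)))]
    rw [← Finset.mul_sum, Finset.sum_add_distrib, ← Finset.sum_mul,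
      mass_tail H T Obs πg hc hπs hTs hOs x o0 a0, one_mul]
    have hpv : ∑ t' : Traj H St Ob Ac,
        trajProb H (fun y => if 0 < H then T 0 x a0 y else 1)
          (sh1 T) (sh1 Obs) (condPol πg x o0 a0) t' *
          ∑ h ∈ Finset.range H, sh1 rr h (extN t'.1 h) (extN t'.2.2 h)
        = pvalue H (T 0 x a0) (sh1 T) (sh1 Obs) (sh1 rr) (condPol πg x o0 a0) := by
      rcases Nat.eq_zero_or_pos H with hH | hH
      · subst hH
        rw [pvalue_zero]
        simp
      · have hμ' : (fun y => if 0 < H then T 0 x a0 y else 1) = T 0 x a0 := by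
          funext y; rw [if_pos hH]
        rw [hμ']
        rfl
    rw [hpv]
    ring
  have expand : ∀ (F : St → Ob → Ac → ℝ),
      (∑ x : St, μ x * ∑ o0 : Ob, Obs 0 x o0 * ∑ a0 : Ac, F x o0 a0)
        = ∑ x : St, ∑ o0 : Ob, ∑ a0 : Ac, μ x * (Obs 0 x o0 * F x o0 a0) := by
    intro F
    refine Finset.sum_congr rfl fun x _ => ?_
    rw [Finset.mul_sum]
    refine Finset.sum_congr rfl fun o0 _ => ?_
    rw [Finset.mul_sum, Finset.mul_sum]
  rw [expand]
  conv_lhs => rw [pvalue]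
  rw [sum_traj_succ]
  exact Finset.sum_congr rfl fun x _ => Finset.sum_congr rfl fun o0 _ =>
    Finset.sum_congr rfl fun a0 _ => key x o0 a0


end PomdpAux

end POMDP

section StrategyMod

open Classical

variable {St Ob : Type*} {n : ℕ} {AcI : Fin n → Type*}

/-- A general strategy modification for agent `i`: given the step and the full
history (states, observations, realized actions) and the recommended action for
agent `i`, output a modified action. -/
abbrev GenMod (St Ob : Type*) {n : ℕ} (AcI : Fin n → Type*) (i : Fin n) :=
  ℕ → (ℕ → St) → (ℕ → Ob) → (ℕ → ∀ j, AcI j) → AcI i → AcI i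

/-- Causality of a strategy modification: at step `h` it may only depend on the
states and observations up to step `h` and realized actions before step `h`. -/
def CausalMod (H : ℕ) {i : Fin n} (m : GenMod St Ob AcI i) : Prop :=
  ∀ h, h < H → ∀ (s s' : ℕ → St) (o o' : ℕ → Ob) (a a' : ℕ → ∀ j, AcI j),
    (∀ k, k ≤ h → s k = s' k) → (∀ k, k ≤ h → o k = o' k) → (∀ k, k < h → a k = a' k) →
    m h s o a = m h s' o' a'

/-- The joint policy induced by the correlated Markov state-based recommendation
policy `π` when agent `i` applies the strategy modification `m`: the realized
joint action replaces agent `i`'s recommended action by its modification. -/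
noncomputable def modPol [DecidableEq (Fin n)] [∀ j, Fintype (AcI j)]
    [∀ j, DecidableEq (AcI j)]
    (π : ℕ → St → (∀ j, AcI j) → ℝ) (i : Fin n) (m : GenMod St Ob AcI i) :
    GPolicy St Ob (∀ j, AcI j) :=
  fun h s o a b =>
    ∑ c : ∀ j, AcI j,
      if Function.update c i (m h s o a (c i)) = b then π h (s h) c else 0

section ModAux

/-! ### auxiliary material for the proof -/

variable [∀ j, Fintype (AcI j)] [∀ j, DecidableEq (AcI j)] [∀ j, Inhabited (AcI j)]

/-- A Markov strategy modification viewed as a general one. -/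
def markMod (i : Fin n) (mk : ℕ → St → AcI i → AcI i) : GenMod St Ob AcI i :=
  fun h s _ _ ai => mk h (s h) ai

lemma markMod_causal (H : ℕ) (i : Fin n) (mk : ℕ → St → AcI i → AcI i) :
    CausalMod H (markMod (Ob := Ob) i mk) := by
  intro h _ s s' o o' a a' hs _ _
  unfold markMod
  rw [hs h le_rfl]

/-- Conditioning a strategy modification on the step-0 data. -/
def condMod (i : Fin n) (m : GenMod St Ob AcI i) (x : St) (o0 : Ob) (a0 : ∀ j, AcI j) :
    GenMod St Ob AcI i :=
  fun k s o a => m (k+1) (nprep x s) (nprep o0 o) (nprep a0 a)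

lemma condMod_causal {H : ℕ} {i : Fin n} {m : GenMod St Ob AcI i}
    (hm : CausalMod (H+1) m) (x : St) (o0 : Ob) (a0 : ∀ j, AcI j) :
    CausalMod H (condMod i m x o0 a0) := by
  intro k hk s s' o o' a a' hs ho ha
  apply hm (k+1) (by omega)
  · intro t ht; cases t with
    | zero => rfl
    | succ t => exact hs t (by omega)
  · intro t ht; cases t with
    | zero => rfl
    | succ t => exact ho t (by omega)
  · intro t ht; cases t with
    | zero => rfl
    | succ t => exact ha t (by omega)

lemma modPol_causal {H : ℕ} (π : ℕ → St → (∀ j, AcI j) → ℝ) (i : Fin n)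
    {m : GenMod St Ob AcI i} (hm : CausalMod H m) :
    CausalPolicy H (modPol π i m) := by
  intro h hh s s' o o' a a' hs ho ha
  funext b
  unfold modPol
  rw [hm h hh s s' o o' a a' hs ho ha, hs h le_rfl]

lemma modPol_sum (π : ℕ → St → (∀ j, AcI j) → ℝ)
    (hπs : ∀ h x, ∑ c, π h x c = 1) (i : Fin n) (m : GenMod St Ob AcI i)
    (h : ℕ) (s : ℕ → St) (o : ℕ → Ob) (a : ℕ → ∀ j, AcI j) :
    ∑ b, modPol π i m h s o a b = 1 := by
  unfold modPol
  rw [Finset.sum_comm]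
  simp only [Finset.sum_ite_eq, Finset.mem_univ, if_true]
  exact hπs h (s h)

lemma modPol_nonneg (π : ℕ → St → (∀ j, AcI j) → ℝ)
    (hπ0 : ∀ h x c, 0 ≤ π h x c) (i : Fin n) (m : GenMod St Ob AcI i)
    (h : ℕ) (s : ℕ → St) (o : ℕ → Ob) (a : ℕ → ∀ j, AcI j) (b : ∀ j, AcI j) :
    0 ≤ modPol π i m h s o a b := by
  unfold modPol
  refine Finset.sum_nonneg fun c _ => ?_
  by_cases hc : Function.update c i (m h s o a (c i)) = b
  · rw [if_pos hc]; exact hπ0 h (s h) c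
  · rw [if_neg hc]

lemma condPol_modPol (π : ℕ → St → (∀ j, AcI j) → ℝ) (i : Fin n)
    (m : GenMod St Ob AcI i) (x : St) (o0 : Ob) (a0 : ∀ j, AcI j) :
    condPol (modPol π i m) x o0 a0 = modPol (sh1 π) i (condMod i m x o0 a0) := rfl

lemma condMod_markMod (i : Fin n) (mk : ℕ → St → AcI i → AcI i)
    (x : St) (o0 : Ob) (a0 : ∀ j, AcI j) :
    condMod i (markMod (Ob := Ob) i mk) x o0 a0 = markMod i (sh1 mk) := rfl


/-- canonical step-0 behavior of a causal strategy modification -/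
def base0 (i : Fin n) (m : GenMod St Ob AcI i) (x : St) (o0 : Ob) (ai : AcI i) : AcI i :=
  m 0 (fun _ => x) (fun _ => o0) (fun _ => default) ai

lemma pol0_modPol {H : ℕ} (π : ℕ → St → (∀ j, AcI j) → ℝ) (i : Fin n)
    {m : GenMod St Ob AcI i} (hm : CausalMod (H+1) m) (x : St) (o0 : Ob) (a0 : ∀ j, AcI j) :
    pol0 (modPol π i m) x o0 a0
      = ∑ c : ∀ j, AcI j,
          if Function.update c i (base0 i m x o0 (c i)) = a0 then π 0 x c else 0 := by
  unfold pol0 modPol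
  have hrw : m 0 (fun _ => x) (fun _ => o0) (fun _ => a0)
      = m 0 (fun _ => x) (fun _ => o0) (fun _ => default) := by
    apply hm 0 (by omega)
    · intro k _; rfl
    · intro k _; rfl
    · intro k hk; omega
  rw [hrw]
  rfl

lemma sum_pol0_mul {H : ℕ} (π : ℕ → St → (∀ j, AcI j) → ℝ) (i : Fin n)
    {m : GenMod St Ob AcI i} (hm : CausalMod (H+1) m) (x : St) (o0 : Ob)
    (g : (∀ j, AcI j) → ℝ) :
    ∑ a0 : ∀ j, AcI j, pol0 (modPol π i m) x o0 a0 * g a0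
      = ∑ c : ∀ j, AcI j, π 0 x c * g (Function.update c i (base0 i m x o0 (c i))) := by
  rw [Finset.sum_congr rfl fun a0 (_ : a0 ∈ Finset.univ) => by
    rw [pol0_modPol π i hm x o0 a0, Finset.sum_mul]]
  rw [Finset.sum_comm]
  refine Finset.sum_congr rfl fun c _ => ?_
  simp [ite_mul, Finset.sum_ite_eq]

lemma sum_group (i : Fin n) (F : (∀ j, AcI j) → ℝ) :
    ∑ c : ∀ j, AcI j, F c = ∑ ai : AcI i, ∑ c : ∀ j, AcI j, if c i = ai then F c else 0 := by
  symm
  rw [Finset.sum_comm]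
  refine Finset.sum_congr rfl fun c _ => ?_
  simp [Finset.sum_ite_eq]

variable [Fintype St]
variable (i : Fin n)

/-- one-step expected payoff of replying `b` to recommendation `ai` in state `x` -/
noncomputable def Wfun (T0 : St → (∀ j, AcI j) → St → ℝ) (r0 : St → (∀ j, AcI j) → ℝ)
    (π0 : St → (∀ j, AcI j) → ℝ) (Vn : St → ℝ) (x : St) (ai : AcI i) (b : AcI i) : ℝ :=
  ∑ c : ∀ j, AcI j, if c i = ai then
    π0 x c * (r0 x (Function.update c i b) +
      ∑ y, T0 x (Function.update c i b) y * Vn y) else 0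

/-- optimal value function of the modifier's MDP -/
noncomputable def Vdp (H : ℕ) : (ℕ → St → (∀ j, AcI j) → St → ℝ) →
    (ℕ → St → (∀ j, AcI j) → ℝ) → (ℕ → St → (∀ j, AcI j) → ℝ) → St → ℝ :=
  Nat.rec (motive := fun _ => (ℕ → St → (∀ j, AcI j) → St → ℝ) →
      (ℕ → St → (∀ j, AcI j) → ℝ) → (ℕ → St → (∀ j, AcI j) → ℝ) → St → ℝ)
    (fun _ _ _ _ => 0)
    (fun _ ih T rr π x => ∑ ai : AcI i,
      Finset.univ.sup' Finset.univ_nonempty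
        (fun b => Wfun i (T 0) (rr 0) (π 0) (ih (sh1 T) (sh1 rr) (sh1 π)) x ai b)) H

/-- value function of a fixed Markov modification -/
noncomputable def Wv (H : ℕ) : (ℕ → St → AcI i → AcI i) →
    (ℕ → St → (∀ j, AcI j) → St → ℝ) →
    (ℕ → St → (∀ j, AcI j) → ℝ) → (ℕ → St → (∀ j, AcI j) → ℝ) → St → ℝ :=
  Nat.rec (motive := fun _ => (ℕ → St → AcI i → AcI i) →
      (ℕ → St → (∀ j, AcI j) → St → ℝ) →
      (ℕ → St → (∀ j, AcI j) → ℝ) → (ℕ → St → (∀ j, AcI j) → ℝ) → St → ℝ)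
    (fun _ _ _ _ _ => 0)
    (fun _ ih mk T rr π x => ∑ ai : AcI i,
      Wfun i (T 0) (rr 0) (π 0) (ih (sh1 mk) (sh1 T) (sh1 rr) (sh1 π)) x ai (mk 0 x ai)) H

noncomputable def amax (f : AcI i → ℝ) : AcI i :=
  (Finset.exists_mem_eq_sup' (Finset.univ_nonempty) f).choose

lemma amax_spec (f : AcI i → ℝ) :
    Finset.univ.sup' Finset.univ_nonempty f = f (amax i f) :=
  (Finset.exists_mem_eq_sup' (Finset.univ_nonempty) f).choose_spec.2

/-- the greedy Markov modification -/
noncomputable def gmk (H : ℕ) : (ℕ → St → (∀ j, AcI j) → St → ℝ) →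
    (ℕ → St → (∀ j, AcI j) → ℝ) → (ℕ → St → (∀ j, AcI j) → ℝ) →
    ℕ → St → AcI i → AcI i :=
  Nat.rec (motive := fun _ => (ℕ → St → (∀ j, AcI j) → St → ℝ) →
      (ℕ → St → (∀ j, AcI j) → ℝ) → (ℕ → St → (∀ j, AcI j) → ℝ) →
      ℕ → St → AcI i → AcI i)
    (fun _ _ _ _ _ ai => ai)
    (fun H ih T rr π h => Nat.casesOn h
      (fun x ai => amax i
        (fun b => Wfun i (T 0) (rr 0) (π 0) (Vdp i H (sh1 T) (sh1 rr) (sh1 π)) x ai b))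
      (fun k => ih (sh1 T) (sh1 rr) (sh1 π) k)) H

lemma gmk_opt : ∀ (H : ℕ) (T : ℕ → St → (∀ j, AcI j) → St → ℝ)
    (rr : ℕ → St → (∀ j, AcI j) → ℝ) (π : ℕ → St → (∀ j, AcI j) → ℝ),
    Wv i H (gmk i H T rr π) T rr π = Vdp i H T rr π := by
  intro H
  induction H with
  | zero => intro T rr π; rfl
  | succ H ih =>
    intro T rr π
    funext x
    show ∑ ai : AcI i, Wfun i (T 0) (rr 0) (π 0)
        (Wv i H (sh1 (gmk i (H+1) T rr π)) (sh1 T) (sh1 rr) (sh1 π)) x ai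
        (gmk i (H+1) T rr π 0 x ai)
      = ∑ ai : AcI i, Finset.univ.sup' Finset.univ_nonempty
          (fun b => Wfun i (T 0) (rr 0) (π 0) (Vdp i H (sh1 T) (sh1 rr) (sh1 π)) x ai b)
    have hsh : sh1 (gmk i (H+1) T rr π) = gmk i H (sh1 T) (sh1 rr) (sh1 π) := rfl
    rw [hsh, ih]
    exact Finset.sum_congr rfl fun ai _ => (amax_spec i _).symm


variable [Fintype Ob] [Inhabited St] [Inhabited Ob]

lemma pol0_nonneg (π : ℕ → St → (∀ j, AcI j) → ℝ) (hπ0 : ∀ h x c, 0 ≤ π h x c)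
    (i : Fin n) (m : GenMod St Ob AcI i) (x : St) (o0 : Ob) (a0 : ∀ j, AcI j) :
    0 ≤ pol0 (modPol π i m) x o0 a0 :=
  modPol_nonneg π hπ0 i m 0 _ _ _ a0

lemma Wv_eq (i : Fin n) : ∀ (H : ℕ) (μ : St → ℝ)
    (T : ℕ → St → (∀ j, AcI j) → St → ℝ) (Obs : ℕ → St → Ob → ℝ)
    (rr : ℕ → St → (∀ j, AcI j) → ℝ) (π : ℕ → St → (∀ j, AcI j) → ℝ)
    (mk : ℕ → St → AcI i → AcI i),
    (∀ h x, ∑ c, π h x c = 1) → (∀ h x u, ∑ y, T h x u y = 1) →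
    (∀ h x, ∑ o', Obs h x o' = 1) →
    pvalue H μ T Obs rr (modPol π i (markMod i mk)) = ∑ x, μ x * Wv i H mk T rr π x := by
  intro H
  induction H with
  | zero =>
    intro μ T Obs rr π mk _ _ _
    rw [pvalue_zero]
    have : ∀ x : St, μ x * Wv i 0 mk T rr π x = 0 := fun x => mul_zero (μ x)
    rw [Finset.sum_congr rfl fun x _ => this x, Finset.sum_const, smul_zero]
  | succ H ih =>
    intro μ T Obs rr π mk hπs hTs hOs
    rw [pvalue_succ H μ T Obs rr _ (modPol_causal π i (markMod_causal (H+1) i mk))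
      (fun h s o a => modPol_sum π hπs i _ h s o a) hTs hOs]
    have htail : ∀ (x : St) (o0 : Ob) (a0 : ∀ j, AcI j),
        pvalue H (T 0 x a0) (sh1 T) (sh1 Obs) (sh1 rr)
          (condPol (modPol π i (markMod i mk)) x o0 a0)
        = ∑ y, T 0 x a0 y * Wv i H (sh1 mk) (sh1 T) (sh1 rr) (sh1 π) y := by
      intro x o0 a0
      rw [condPol_modPol, condMod_markMod]
      exact ih (T 0 x a0) (sh1 T) (sh1 Obs) (sh1 rr) (sh1 π) (sh1 mk)
        (fun h x' => hπs (h+1) x') (fun h x' u => hTs (h+1) x' u)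
        (fun h x' => hOs (h+1) x')
    refine Finset.sum_congr rfl fun x _ => ?_
    congr 1
    have hinner : ∀ o0 : Ob,
        ∑ a0 : ∀ j, AcI j, pol0 (modPol π i (markMod i mk)) x o0 a0 *
          (rr 0 x a0 + pvalue H (T 0 x a0) (sh1 T) (sh1 Obs) (sh1 rr)
            (condPol (modPol π i (markMod i mk)) x o0 a0))
        = Wv i (H+1) mk T rr π x := by
      intro o0
      rw [Finset.sum_congr rfl fun a0 (_ : a0 ∈ Finset.univ) => by rw [htail x o0 a0]]
      rw [sum_pol0_mul π i (markMod_causal (H+1) i mk) x o0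
        (fun a0 => rr 0 x a0 + ∑ y, T 0 x a0 y * Wv i H (sh1 mk) (sh1 T) (sh1 rr) (sh1 π) y)]
      rw [sum_group i]
      show _ = ∑ ai : AcI i, Wfun i (T 0) (rr 0) (π 0)
        (Wv i H (sh1 mk) (sh1 T) (sh1 rr) (sh1 π)) x ai (mk 0 x ai)
      refine Finset.sum_congr rfl fun ai _ => ?_
      unfold Wfun
      refine Finset.sum_congr rfl fun c _ => ?_
      by_cases hc : c i = ai
      · rw [if_pos hc, if_pos hc, hc]; rfl
      · rw [if_neg hc, if_neg hc]
    rw [Finset.sum_congr rfl fun o0 (_ : o0 ∈ Finset.univ) => by rw [hinner o0]]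
    rw [← Finset.sum_mul, hOs 0 x, one_mul]

lemma ge_bound (i : Fin n) : ∀ (H : ℕ) (μ : St → ℝ)
    (T : ℕ → St → (∀ j, AcI j) → St → ℝ) (Obs : ℕ → St → Ob → ℝ)
    (rr : ℕ → St → (∀ j, AcI j) → ℝ) (π : ℕ → St → (∀ j, AcI j) → ℝ)
    (m : GenMod St Ob AcI i),
    CausalMod H m → (∀ x, 0 ≤ μ x) →
    (∀ h x c, 0 ≤ π h x c) → (∀ h x, ∑ c, π h x c = 1) →
    (∀ h x u y, 0 ≤ T h x u y) → (∀ h x u, ∑ y, T h x u y = 1) →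
    (∀ h x o', 0 ≤ Obs h x o') → (∀ h x, ∑ o', Obs h x o' = 1) →
    pvalue H μ T Obs rr (modPol π i m) ≤ ∑ x, μ x * Vdp i H T rr π x := by
  intro H
  induction H with
  | zero =>
    intro μ T Obs rr π m _ _ _ _ _ _ _ _
    rw [pvalue_zero]
    have : ∀ x : St, μ x * Vdp i 0 T rr π x = 0 := fun x => mul_zero (μ x)
    rw [Finset.sum_congr rfl fun x _ => this x, Finset.sum_const, smul_zero]
  | succ H ih =>
    intro μ T Obs rr π m hm hμ0 hπ0 hπs hT0 hTs hO0 hOs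
    rw [pvalue_succ H μ T Obs rr _ (modPol_causal π i hm) (modPol_sum π hπs i m) hTs hOs]
    have step1 : ∀ (x : St) (o0 : Ob) (a0 : ∀ j, AcI j),
        pvalue H (T 0 x a0) (sh1 T) (sh1 Obs) (sh1 rr) (condPol (modPol π i m) x o0 a0)
        ≤ ∑ y, T 0 x a0 y * Vdp i H (sh1 T) (sh1 rr) (sh1 π) y := by
      intro x o0 a0
      rw [condPol_modPol]
      exact ih (T 0 x a0) (sh1 T) (sh1 Obs) (sh1 rr) (sh1 π) (condMod i m x o0 a0)
        (condMod_causal hm x o0 a0) (hT0 0 x a0)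
        (fun h x' c => hπ0 (h+1) x' c) (fun h x' => hπs (h+1) x')
        (fun h x' u y => hT0 (h+1) x' u y) (fun h x' u => hTs (h+1) x' u)
        (fun h x' o' => hO0 (h+1) x' o') (fun h x' => hOs (h+1) x')
    have hmono : ∑ x, μ x * ∑ o0, Obs 0 x o0 * ∑ a0, pol0 (modPol π i m) x o0 a0 *
          (rr 0 x a0 + pvalue H (T 0 x a0) (sh1 T) (sh1 Obs) (sh1 rr)
            (condPol (modPol π i m) x o0 a0))
        ≤ ∑ x, μ x * ∑ o0, Obs 0 x o0 * ∑ a0, pol0 (modPol π i m) x o0 a0 *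
          (rr 0 x a0 + ∑ y, T 0 x a0 y * Vdp i H (sh1 T) (sh1 rr) (sh1 π) y) := by
      refine Finset.sum_le_sum fun x _ => mul_le_mul_of_nonneg_left
        (Finset.sum_le_sum fun o0 _ => mul_le_mul_of_nonneg_left
          (Finset.sum_le_sum fun a0 _ => mul_le_mul_of_nonneg_left
            (add_le_add le_rfl (step1 x o0 a0))
            (pol0_nonneg π hπ0 i m x o0 a0))
          (hO0 0 x o0))
        (hμ0 x)
    refine hmono.trans ?_
    refine Finset.sum_le_sum fun x _ => mul_le_mul_of_nonneg_left ?_ (hμ0 x)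
    have hin : ∀ o0 : Ob, ∑ a0 : ∀ j, AcI j, pol0 (modPol π i m) x o0 a0 *
        (rr 0 x a0 + ∑ y, T 0 x a0 y * Vdp i H (sh1 T) (sh1 rr) (sh1 π) y)
        ≤ Vdp i (H+1) T rr π x := by
      intro o0
      rw [sum_pol0_mul π i hm x o0
        (fun a0 => rr 0 x a0 + ∑ y, T 0 x a0 y * Vdp i H (sh1 T) (sh1 rr) (sh1 π) y)]
      rw [sum_group i]
      show _ ≤ ∑ ai : AcI i, Finset.univ.sup' Finset.univ_nonempty
        (fun b => Wfun i (T 0) (rr 0) (π 0) (Vdp i H (sh1 T) (sh1 rr) (sh1 π)) x ai b)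
      refine Finset.sum_le_sum fun ai _ => ?_
      have hWf : (∑ c : ∀ j, AcI j, if c i = ai then π 0 x c *
            (rr 0 x (Function.update c i (base0 i m x o0 (c i))) +
              ∑ y, T 0 x (Function.update c i (base0 i m x o0 (c i))) y *
                Vdp i H (sh1 T) (sh1 rr) (sh1 π) y) else 0)
          = Wfun i (T 0) (rr 0) (π 0) (Vdp i H (sh1 T) (sh1 rr) (sh1 π)) x ai
              (base0 i m x o0 ai) := by
        unfold Wfun
        refine Finset.sum_congr rfl fun c _ => ?_
        by_cases hc : c i = ai
        · rw [if_pos hc, if_pos hc, hc]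
        · rw [if_neg hc, if_neg hc]
      rw [hWf]
      exact Finset.le_sup' _ (Finset.mem_univ (base0 i m x o0 ai))
    calc ∑ o0, Obs 0 x o0 * ∑ a0, pol0 (modPol π i m) x o0 a0 *
          (rr 0 x a0 + ∑ y, T 0 x a0 y * Vdp i H (sh1 T) (sh1 rr) (sh1 π) y)
        ≤ ∑ o0, Obs 0 x o0 * Vdp i (H+1) T rr π x :=
          Finset.sum_le_sum fun o0 _ =>
            mul_le_mul_of_nonneg_left (hin o0) (hO0 0 x o0)
      _ = Vdp i (H+1) T rr π x := by rw [← Finset.sum_mul, hOs 0 x, one_mul]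


end ModAux

/-- For a Markov correlated state-based recommendation policy in
a finite-horizon stochastic game, the best value achievable by agent `i` via
general (history-and-state-dependent, causal) strategy modifications equals the
best value achievable via Markov strategy modifications that condition only on
the current state and the recommended action. -/
theorem stmt_15 [Fintype St] [Fintype Ob] [∀ j, Fintype (AcI j)] [∀ j, DecidableEq (AcI j)]
    [Inhabited St] [Inhabited Ob] [∀ j, Inhabited (AcI j)]
    (H : ℕ) (hH : 0 < H)
    (μ : St → ℝ) (T : ℕ → St → (∀ j, AcI j) → St → ℝ) (Obs : ℕ → St → Ob → ℝ)
    (hμ0 : ∀ x, 0 ≤ μ x) (hμs : ∑ x, μ x = 1)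
    (hT0 : ∀ h x u y, 0 ≤ T h x u y) (hTs : ∀ h x u, ∑ y, T h x u y = 1)
    (hO0 : ∀ h x o, 0 ≤ Obs h x o) (hOs : ∀ h x, ∑ o, Obs h x o = 1)
    (r : Fin n → ℕ → St → (∀ j, AcI j) → ℝ)
    (hr0 : ∀ i h x u, 0 ≤ r i h x u) (hr1 : ∀ i h x u, r i h x u ≤ 1)
    (π : ℕ → St → (∀ j, AcI j) → ℝ)
    (hπ0 : ∀ h x c, 0 ≤ π h x c) (hπs : ∀ h x, ∑ c, π h x c = 1) :
    ∀ i : Fin n,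
      (⨆ m : {m : GenMod St Ob AcI i // CausalMod H m},
          pvalue H μ T Obs (r i) (modPol π i m.1)) =
        ⨆ mk : ℕ → St → AcI i → AcI i,
          pvalue H μ T Obs (r i)
            (modPol π i (fun h s _o _a ai => mk h (s h) ai)) := by
  intro i
  haveI : Nonempty {m : GenMod St Ob AcI i // CausalMod H m} :=
    ⟨⟨fun _ _ _ _ ai => ai, fun _ _ _ _ _ _ _ _ _ _ _ => rfl⟩⟩
  have hbdd1 : ∀ m : {m : GenMod St Ob AcI i // CausalMod H m},
      pvalue H μ T Obs (r i) (modPol π i m.1) ≤ ∑ x, μ x * Vdp i H T (r i) π x :=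
    fun m => ge_bound i H μ T Obs (r i) π m.1 m.2 hμ0 hπ0 hπs hT0 hTs hO0 hOs
  have hbdd2 : ∀ mk : ℕ → St → AcI i → AcI i,
      pvalue H μ T Obs (r i) (modPol π i (fun h s _o _a ai => mk h (s h) ai))
        ≤ ∑ x, μ x * Vdp i H T (r i) π x :=
    fun mk => ge_bound i H μ T Obs (r i) π _ (markMod_causal H i mk)
      hμ0 hπ0 hπs hT0 hTs hO0 hOs
  have hB1 : BddAbove (Set.range fun m : {m : GenMod St Ob AcI i // CausalMod H m} =>
      pvalue H μ T Obs (r i) (modPol π i m.1)) := by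
    refine ⟨∑ x, μ x * Vdp i H T (r i) π x, ?_⟩
    rintro y ⟨m, rfl⟩
    exact hbdd1 m
  have hB2 : BddAbove (Set.range fun mk : ℕ → St → AcI i → AcI i =>
      pvalue H μ T Obs (r i) (modPol π i (fun h s _o _a ai => mk h (s h) ai))) := by
    refine ⟨∑ x, μ x * Vdp i H T (r i) π x, ?_⟩
    rintro y ⟨mk, rfl⟩
    exact hbdd2 mk
  have h2 : pvalue H μ T Obs (r i) (modPol π i (markMod i (gmk i H T (r i) π)))
      = ∑ x, μ x * Vdp i H T (r i) π x := by
    rw [Wv_eq i H μ T Obs (r i) π (gmk i H T (r i) π) hπs hTs hOs,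
      gmk_opt i H T (r i) π]
  apply le_antisymm
  · refine ciSup_le fun m => ?_
    calc pvalue H μ T Obs (r i) (modPol π i m.1)
        ≤ ∑ x, μ x * Vdp i H T (r i) π x := hbdd1 m
      _ = pvalue H μ T Obs (r i) (modPol π i (markMod i (gmk i H T (r i) π))) := h2.symm
      _ ≤ _ := le_ciSup hB2 (gmk i H T (r i) π)
  · refine ciSup_le fun mk => ?_
    exact le_ciSup hB1
      (⟨fun h s _o _a ai => mk h (s h) ai, markMod_causal H i mk⟩ :
        {m : GenMod St Ob AcI i // CausalMod H m})


end StrategyMod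
end

section
/- Under the optimistic value iteration recursion with bonuses, the optimism property holds: suppose for all $(s,a)$ at step $h$, the estimated next-observation kernel satisfies $\|\hat{J}_h(\cdot \mid s,a) - \mathbb{P}(\cdot \mid s,a)\|_1 \leq b_h(s,a)/(H-h)$ where $b_h(s,a) \leq 2(H-h)$, and that the value estimate at step $h+1$ dominates the target value: $V_{h+1}^{\mathrm{high}}(c_{h+1}) \geq \hat{V}_{h+1}(c_{h+1})$ with $0 \leq \hat{V}_{h+1} \leq H - h$. Then the clipped optimistic update $Q_h^{\mathrm{high}}(\cdot) = \min\{r_h(s,a) + b_h(s,a) + \mathbb{E}_{o \sim \hat{J}_h(\cdot\mid s,a)}[V_{h+1}^{\mathrm{high}}(c_{h+1})],\ H-h+1\}$ satisfies $Q_h^{\mathrm{high}}(\cdot) \geq r_h(s,a) + \mathbb{E}_{o \sim \mathbb{P}(\cdot \mid s,a)}[\hat{V}_{h+1}(c_{h+1})]$ for all $(s,a)$ with $r_h(s,a) \in [0,1]$. -/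
open Finset

/-- One-step optimism of the clipped optimistic backup: if the
bonus dominates `(H-h)` times the `ℓ¹` model error of the estimated
next-observation kernel, and the optimistic value at the next step dominates a
target value taking values in `[0, H-h]`, then the clipped optimistic `Q`-update
dominates the true one-step backup of the target value. -/
theorem stmt_18 {S A O C : Type*} [Fintype O]
    (H h : ℕ) (hh : h < H)
    (r bfn : S → A → ℝ) (Jhat P : S → A → O → ℝ)
    (cnext : S → A → O → C) (Vhigh Vhat : C → ℝ)
    (hr0 : ∀ s a, 0 ≤ r s a) (hr1 : ∀ s a, r s a ≤ 1)
    (hJ0 : ∀ s a o, 0 ≤ Jhat s a o)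
    (hP0 : ∀ s a o, 0 ≤ P s a o) (hPs : ∀ s a, ∑ o, P s a o = 1)
    (hb2 : ∀ s a, bfn s a ≤ 2 * ((H : ℝ) - h))
    (hberr : ∀ s a, ∑ o, |P s a o - Jhat s a o| ≤ bfn s a / ((H : ℝ) - h))
    (hdom : ∀ c, Vhat c ≤ Vhigh c)
    (hV0 : ∀ c, 0 ≤ Vhat c) (hV1 : ∀ c, Vhat c ≤ (H : ℝ) - h) :
    ∀ s a, r s a + ∑ o, P s a o * Vhat (cnext s a o) ≤
      min (r s a + bfn s a + ∑ o, Jhat s a o * Vhigh (cnext s a o)) ((H : ℝ) - h + 1) := by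
  intro s a
  have hHh : (0:ℝ) < (H:ℝ) - h := by
    have : (h:ℝ) < H := by exact_mod_cast hh
    linarith
  rw [le_min_iff]
  constructor
  · -- main optimism part
    have key : ∑ o, P s a o * Vhat (cnext s a o)
        ≤ bfn s a + ∑ o, Jhat s a o * Vhigh (cnext s a o) := by
      have h1 : ∑ o, P s a o * Vhat (cnext s a o)
          - ∑ o, Jhat s a o * Vhat (cnext s a o)
          = ∑ o, (P s a o - Jhat s a o) * Vhat (cnext s a o) := by
        rw [← Finset.sum_sub_distrib]; congr 1; ext o; ring
      have h2 : ∑ o, (P s a o - Jhat s a o) * Vhat (cnext s a o)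
          ≤ ∑ o, |P s a o - Jhat s a o| * ((H:ℝ) - h) := by
        apply Finset.sum_le_sum
        intro o _
        calc (P s a o - Jhat s a o) * Vhat (cnext s a o)
            ≤ |P s a o - Jhat s a o| * Vhat (cnext s a o) := by
              apply mul_le_mul_of_nonneg_right (le_abs_self _) (hV0 _)
          _ ≤ |P s a o - Jhat s a o| * ((H:ℝ) - h) := by
              apply mul_le_mul_of_nonneg_left (hV1 _) (abs_nonneg _)
      have h3 : ∑ o, |P s a o - Jhat s a o| * ((H:ℝ) - h) ≤ bfn s a := by
        rw [← Finset.sum_mul]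
        have := hberr s a
        calc (∑ o, |P s a o - Jhat s a o|) * ((H:ℝ) - h)
            ≤ (bfn s a / ((H:ℝ) - h)) * ((H:ℝ) - h) := by
              apply mul_le_mul_of_nonneg_right this (le_of_lt hHh)
          _ = bfn s a := by field_simp
      have h4 : ∑ o, Jhat s a o * Vhat (cnext s a o)
          ≤ ∑ o, Jhat s a o * Vhigh (cnext s a o) := by
        apply Finset.sum_le_sum
        intro o _
        exact mul_le_mul_of_nonneg_left (hdom _) (hJ0 s a o)
      linarith
    linarith
  · -- clipping part
    have : ∑ o, P s a o * Vhat (cnext s a o) ≤ (H:ℝ) - h := by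
      calc ∑ o, P s a o * Vhat (cnext s a o)
          ≤ ∑ o, P s a o * ((H:ℝ) - h) := by
            apply Finset.sum_le_sum
            intro o _
            exact mul_le_mul_of_nonneg_left (hV1 _) (hP0 s a o)
        _ = (H:ℝ) - h := by rw [← Finset.sum_mul, hPs s a, one_mul]
    linarith [hr1 s a]
end
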